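/- arXiv:1705.02778 — 2 statements merged into one kernel-verified Lean document; each statement's English description precedes it below -/
import Mathlib

section
/- Let R be a unital non-associative ring, G a commutative monoid, and π a unital G-derivation on R that is strong and well-ordered, and let S = R[G;π] be the differential monoid ring. Assume that either (D8) holds, or (D7) holds and π is commutative. Then S is G-simple if and only if R is G-simple and Z(S)^G is a field, where Z(S)^G = {s ∈ Z(S) : for all a,b ∈ G, π̃^a_b(s) = s if a = b and π̃^a_b(s) = 0 otherwise}. -/
open scoped Classical

/-! Common framework: Ore monoid rings `R[G;π]` over a unital non-associative ring `R`
and a monoid `G`.  A `G`-derivation `π = {π^a_b}` is encoded as a map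
`π : G → R → (G →₀ R)`, where `π a r b = π^a_b(r)`; axiom (D0) (finite support in `b`)
is built into the `Finsupp` encoding.  The Ore monoid ring `S = R[G;π]` is the
additive group `G →₀ R` of finitely supported formal sums `Σ r_a xᵃ`
(with `Finsupp.single a r` representing `r xᵃ`), equipped with the
multiplication `GDeriv.mul` below. -/

/-- A two-sided ideal with respect to a (possibly non-associative, non-unital)
multiplication `m` on an additive group `A`. -/
structure IsIdealWith {A : Type*} [AddCommGroup A] (m : A → A → A) (J : Set A) : Prop where
  zero_mem : (0 : A) ∈ J
  add_mem : ∀ {x y : A}, x ∈ J → y ∈ J → x + y ∈ J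
  neg_mem : ∀ {x : A}, x ∈ J → -x ∈ J
  mul_mem_left : ∀ (r : A) {x : A}, x ∈ J → m r x ∈ J
  mul_mem_right : ∀ {x : A} (r : A), x ∈ J → m x r ∈ J

/-- The subset `F` of `A` is a field with respect to the multiplication `m` with
identity `one`: it is a commutative unital subring in which every nonzero element
has a multiplicative inverse. -/
def IsFieldWith {A : Type*} [AddCommGroup A] (m : A → A → A) (one : A) (F : Set A) : Prop :=
  one ∈ F ∧ (∀ x ∈ F, ∀ y ∈ F, x + y ∈ F) ∧ (∀ x ∈ F, -x ∈ F) ∧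
  (∀ x ∈ F, ∀ y ∈ F, m x y ∈ F) ∧ (∀ x ∈ F, ∀ y ∈ F, m x y = m y x) ∧
  (∀ x ∈ F, x ≠ 0 → ∃ y ∈ F, m x y = one ∧ m y x = one)

/-- A `G`-derivation on `R`: axioms (D0)–(D4).  Here `π a r b` denotes `π^a_b(r)`,
and (D0) holds by the finite support of `π a r : G →₀ R`. -/
structure GDeriv (R : Type*) [NonAssocRing R] (G : Type*) [Monoid G] where
  /-- the family of maps; `π a r b = π^a_b(r)` -/
  π : G → R → (G →₀ R)
  /-- (D1): `π^e_e = id` and `π^e_a = 0` for `a ≠ e` -/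
  d1 : ∀ r : R, π 1 r = Finsupp.single 1 r
  /-- (D2): `π^a_b(1) = δ_{a,b}` -/
  d2 : ∀ a : G, π a (1 : R) = Finsupp.single a (1 : R)
  /-- (D3): each `π^a_b` is additive -/
  d3 : ∀ (a : G) (r s : R), π a (r + s) = π a r + π a s
  /-- (D4): `π^{ab}_c = Σ_{df = c} π^a_d ∘ π^b_f` -/
  d4 : ∀ (a b : G) (r : R),
    π (a * b) r = (π b r).sum fun f s => (π a s).sum fun d t => Finsupp.single (d * f) t

namespace GDeriv

variable {R : Type*} [NonAssocRing R] {G : Type*} [Monoid G] (P : GDeriv R G)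

/-- The multiplication of the Ore monoid ring `S = R[G;π]` on `G →₀ R`:
the biadditive extension of `(r xᵃ)(s xᵇ) = Σ_c r π^a_c(s) x^{cb}`. -/
noncomputable def mul (u v : G →₀ R) : G →₀ R :=
  u.sum fun a r => v.sum fun b s => (P.π a s).sum fun c t => Finsupp.single (c * b) (r * t)

/-- The multiplicative identity `1·xᵉ` of `S`. -/
noncomputable def one (_P : GDeriv R G) : G →₀ R := Finsupp.single 1 1

/-- `R^G = {r ∈ R : π^a_b(r) = δ_{a,b} r}`. -/
def fixed : Set R := {r | ∀ a : G, P.π a r = Finsupp.single a r}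

/-- `S^G = Σ_a R^G xᵃ`, the elements of `S` all of whose coefficients lie in `R^G`. -/
def fixedS : Set (G →₀ R) := {u | ∀ c : G, u c ∈ P.fixed}

/-- (D7): every `π^a_b` is left `R^G`-linear. -/
def LeftLinear : Prop := ∀ a b : G, ∀ s ∈ P.fixed, ∀ r : R, P.π a (s * r) b = s * P.π a r b

/-- (D8): every `π^a_b` is right `R^G`-linear. -/
def RightLinear : Prop := ∀ a b : G, ∀ r : R, ∀ s ∈ P.fixed, P.π a (r * s) b = P.π a r b * s

/-- `π` is strong if (D7) or (D8) holds. -/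
def Strong : Prop := P.LeftLinear ∨ P.RightLinear

/-- (D6): `π^a_a = id_R` for all `a ∈ G` (i.e. `π` is unital). -/
def Unital : Prop := ∀ (a : G) (r : R), P.π a r a = r

/-- `π` is commutative: `π^a_b ∘ π^c_d = π^c_d ∘ π^a_b`. -/
def Commutes : Prop := ∀ (a b c d : G) (r : R), P.π a (P.π c r d) b = P.π c (P.π a r b) d

/-- `π` is well-ordered: there is a well-order on `G` whose strict part `lt`
satisfies `π^a_b = 0` whenever `a ≺ b`. -/
def WellOrdered : Prop :=
  ∃ lt : G → G → Prop, IsWellOrder G lt ∧ ∀ a b : G, lt a b → ∀ r : R, P.π a r b = 0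

/-- The extension `π̃^a_b : S → S`, `π̃^a_b(Σ_c r_c x^c) = Σ_c π^a_b(r_c) x^c`. -/
noncomputable def ext (a b : G) (u : G →₀ R) : G →₀ R := u.sum fun c r => Finsupp.single c (P.π a r b)

/-- The commutator `[u,v] = uv - vu` in `S`. -/
noncomputable def commS (u v : G →₀ R) : G →₀ R := P.mul u v - P.mul v u

/-- The associator `(u,v,w) = (uv)w - u(vw)` in `S`. -/
noncomputable def assocS (u v w : G →₀ R) : G →₀ R := P.mul (P.mul u v) w - P.mul u (P.mul v w)

/-- The left nucleus `N_l(S)`. -/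
def Nl : Set (G →₀ R) := {u | ∀ v w, P.assocS u v w = 0}

/-- The middle nucleus `N_m(S)`. -/
def Nm : Set (G →₀ R) := {u | ∀ v w, P.assocS v u w = 0}

/-- The right nucleus `N_r(S)`. -/
def Nr : Set (G →₀ R) := {u | ∀ v w, P.assocS v w u = 0}

/-- The commuter `C(S)`. -/
def CS : Set (G →₀ R) := {u | ∀ v, P.mul u v = P.mul v u}

/-- The center `Z(S) = C(S) ∩ N_l(S) ∩ N_m(S) ∩ N_r(S)`. -/
def Z : Set (G →₀ R) := P.CS ∩ (P.Nl ∩ P.Nm ∩ P.Nr)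

/-- `Z(S)^G = {s ∈ Z(S) : π̃^a_b(s) = δ_{a,b} s}`. -/
def ZG : Set (G →₀ R) :=
  {s | s ∈ P.Z ∧ ∀ a b : G, P.ext a b s = if a = b then s else 0}

/-- `R` is `G`-simple: `{0}` and `R` are the only `G`-invariant ideals of `R`. -/
def RSimple : Prop :=
  ∀ J : Set R, IsIdealWith (· * ·) J → (∀ a b : G, ∀ r ∈ J, P.π a r b ∈ J) →
    J = {0} ∨ J = Set.univ

/-- `S` is `G`-simple: `{0}` and `S` are the only ideals of `S` invariant under all `π̃^a_b`. -/
def SSimple : Prop :=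
  ∀ J : Set (G →₀ R), IsIdealWith P.mul J → (∀ a b : G, ∀ u ∈ J, P.ext a b u ∈ J) →
    J = {0} ∨ J = Set.univ

end GDeriv


/-! ### Auxiliary toolkit -/

namespace GDeriv

open Finsupp

variable {R : Type*} [NonAssocRing R] {G : Type*} [Monoid G] (P : GDeriv R G)

theorem pi_zero (a : G) : P.π a 0 = 0 := by
  have h := P.d3 a 0 0
  rw [add_zero] at h
  exact (left_eq_add.mp h)

theorem pi_zero_apply (a b : G) : P.π a 0 b = 0 := by rw [P.pi_zero]; rfl

theorem pi_neg (a : G) (r : R) : P.π a (-r) = -P.π a r := by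
  have h := P.d3 a r (-r)
  rw [add_neg_cancel, P.pi_zero] at h
  exact eq_neg_of_add_eq_zero_right h.symm

theorem pi_neg_apply (a : G) (r : R) (b : G) : P.π a (-r) b = -P.π a r b := by
  rw [P.pi_neg]; rfl

/-- `π^a_b` as an additive map in `r`, evaluated at `b`. -/
theorem pi_add_apply (a : G) (r s : R) (b : G) :
    P.π a (r + s) b = P.π a r b + P.π a s b := by rw [P.d3]; rfl

theorem pi_finset_sum {ι : Type*} (a : G) (s : Finset ι) (f : ι → R) (b : G) :
    P.π a (∑ i ∈ s, f i) b = ∑ i ∈ s, P.π a (f i) b := by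
  classical
  induction s using Finset.induction with
  | empty => simp [P.pi_zero_apply]
  | insert c t hx ih => rw [Finset.sum_insert hx, P.pi_add_apply, ih,
      Finset.sum_insert hx]

end GDeriv

/-- Helper: applying a "diagonal" `Finsupp.sum` of singles at a point. -/
theorem sum_single_apply {R : Type*} [NonAssocRing R] {G : Type*} (X : G →₀ R)
    (F : G → R → R) (hF : ∀ g, F g 0 = 0) (g : G) :
    (X.sum fun b x => Finsupp.single b (F b x)) g = F g (X g) := by
  classical
  rw [Finsupp.sum_apply, Finsupp.sum]
  simp only [Finsupp.single_apply]
  rw [Finset.sum_ite_eq' X.support g (fun b => F b (X b))]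
  split_ifs with hg
  · rfl
  · rw [Finsupp.notMem_support_iff.mp hg, hF]

namespace GDeriv

open Finsupp

variable {R : Type*} [NonAssocRing R] {G : Type*} [Monoid G] (P : GDeriv R G)

theorem mul_def (u v : G →₀ R) :
    P.mul u v = u.sum fun a r => v.sum fun b s =>
      (P.π a s).sum fun c t => Finsupp.single (c * b) (r * t) := rfl

theorem zero_mul' (v : G →₀ R) : P.mul 0 v = 0 := by
  rw [mul_def, Finsupp.sum_zero_index]

theorem mul_zero' (u : G →₀ R) : P.mul u 0 = 0 := by
  rw [mul_def]
  simp [Finsupp.sum_zero_index]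

theorem add_mul' (u u' v : G →₀ R) : P.mul (u + u') v = P.mul u v + P.mul u' v := by
  rw [mul_def, mul_def, mul_def]
  apply Finsupp.sum_add_index' <;> intro a
  · simp
  · intro r r'
    rw [← Finsupp.sum_add]
    apply Finsupp.sum_congr
    intro b _
    rw [← Finsupp.sum_add]
    apply Finsupp.sum_congr
    intro c _
    rw [add_mul, Finsupp.single_add]

theorem mul_add' (u v v' : G →₀ R) : P.mul u (v + v') = P.mul u v + P.mul u v' := by
  rw [mul_def, mul_def, mul_def, ← Finsupp.sum_add]
  apply Finsupp.sum_congr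
  intro a _
  apply Finsupp.sum_add_index' <;> intro b
  · simp [P.pi_zero]
  · intro s s'
    rw [P.d3]
    apply Finsupp.sum_add_index' <;> intro c
    · simp
    · intro t t'
      rw [mul_add, Finsupp.single_add]

/-- `P.mul · v` as an additive monoid hom. -/
noncomputable def mulL (v : G →₀ R) : (G →₀ R) →+ (G →₀ R) :=
  AddMonoidHom.mk' (fun u => P.mul u v) (fun u u' => P.add_mul' u u' v)

/-- `P.mul u ·` as an additive monoid hom. -/
noncomputable def mulR (u : G →₀ R) : (G →₀ R) →+ (G →₀ R) :=
  AddMonoidHom.mk' (fun v => P.mul u v) (fun v v' => P.mul_add' u v v')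

theorem neg_mul' (u v : G →₀ R) : P.mul (-u) v = -P.mul u v := map_neg (P.mulL v) u
theorem mul_neg' (u v : G →₀ R) : P.mul u (-v) = -P.mul u v := map_neg (P.mulR u) v
theorem sub_mul' (u u' v : G →₀ R) : P.mul (u - u') v = P.mul u v - P.mul u' v :=
  map_sub (P.mulL v) u u'
theorem mul_sub' (u v v' : G →₀ R) : P.mul u (v - v') = P.mul u v - P.mul u v' :=
  map_sub (P.mulR u) v v'

theorem mul_single_single (b : G) (s : R) (g : G) (t : R) :
    P.mul (Finsupp.single b s) (Finsupp.single g t) =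
      (P.π b t).sum fun c z => Finsupp.single (c * g) (s * z) := by
  rw [mul_def, Finsupp.sum_single_index, Finsupp.sum_single_index]
  · simp [P.pi_zero]
  · simp [Finsupp.sum_zero_index]

theorem mul_single_right (X : G →₀ R) (g : G) (t : R) :
    P.mul X (Finsupp.single g t) =
      X.sum fun a r => (P.π a t).sum fun c z => Finsupp.single (c * g) (r * z) := by
  rw [mul_def]
  apply Finsupp.sum_congr
  intro a _
  rw [Finsupp.sum_single_index]
  simp [P.pi_zero]

theorem single_one_mul (r : R) (X : G →₀ R) :
    P.mul (Finsupp.single 1 r) X = X.sum fun b x => Finsupp.single b (r * x) := by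
  rw [mul_def, Finsupp.sum_single_index]
  · apply Finsupp.sum_congr
    intro b _
    rw [P.d1, Finsupp.sum_single_index] <;> simp
  · simp

theorem mul_single_one_right (X : G →₀ R) (t : R) :
    P.mul X (Finsupp.single 1 t) =
      X.sum fun a r => (P.π a t).sum fun c z => Finsupp.single c (r * z) := by
  rw [P.mul_single_right]
  apply Finsupp.sum_congr; intro a _
  apply Finsupp.sum_congr; intro c _
  rw [mul_one]

theorem single_one_mul_apply (r : R) (X : G →₀ R) (g : G) :
    (P.mul (Finsupp.single 1 r) X) g = r * X g := by
  rw [P.single_one_mul]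
  exact sum_single_apply X (fun _ x => r * x) (fun _ => mul_zero r) g

theorem mul_single_one_right_apply (X : G →₀ R) (t : R) (g : G) :
    (P.mul X (Finsupp.single 1 t)) g = X.sum fun a r => r * P.π a t g := by
  rw [P.mul_single_one_right, Finsupp.sum_apply]
  apply Finsupp.sum_congr
  intro a _
  exact sum_single_apply (P.π a t) (fun _ z => X a * z) (fun _ => mul_zero _) g

theorem ext_def (a b : G) (u : G →₀ R) :
    P.ext a b u = u.sum fun c r => Finsupp.single c (P.π a r b) := rfl

theorem ext_apply (a b : G) (u : G →₀ R) (g : G) :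
    P.ext a b u g = P.π a (u g) b :=
  sum_single_apply u (fun _ r => P.π a r b) (fun _ => P.pi_zero_apply a b) g

theorem ext_add (a b : G) (u v : G →₀ R) :
    P.ext a b (u + v) = P.ext a b u + P.ext a b v := by
  ext g; rw [Finsupp.add_apply, P.ext_apply, P.ext_apply, P.ext_apply,
    Finsupp.add_apply, P.pi_add_apply]

theorem ext_sub (a b : G) (u v : G →₀ R) :
    P.ext a b (u - v) = P.ext a b u - P.ext a b v := by
  ext g
  rw [Finsupp.sub_apply, P.ext_apply, P.ext_apply, P.ext_apply, Finsupp.sub_apply,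
    sub_eq_add_neg, sub_eq_add_neg, P.pi_add_apply, P.pi_neg_apply]

theorem mul_one' (X : G →₀ R) : P.mul X P.one = X := by
  rw [one, P.mul_single_right]
  conv_rhs => rw [← X.sum_single]
  apply Finsupp.sum_congr
  intro a _
  rw [P.d2, Finsupp.sum_single_index] <;> simp

theorem one_mul' (X : G →₀ R) : P.mul P.one X = X := by
  rw [one, P.single_one_mul]
  conv_rhs => rw [← X.sum_single]
  apply Finsupp.sum_congr
  intro a _
  rw [one_mul]

end GDeriv


/-- Helper: summing over two finsupps with pointwise-equal composite terms. -/
theorem Finsupp.sum_congr_ext {G R M : Type*} [Zero R] [AddCommMonoid M]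
    (f g : G →₀ R) (F1 F2 : G → R → M) (hF1 : ∀ c, F1 c 0 = 0) (hF2 : ∀ c, F2 c 0 = 0)
    (h : ∀ c, F1 c (f c) = F2 c (g c)) : f.sum F1 = g.sum F2 := by
  classical
  rw [Finsupp.sum_of_support_subset f (Finset.subset_union_left (s₂ := g.support))
      F1 (fun c _ => hF1 c),
    Finsupp.sum_of_support_subset g (Finset.subset_union_right (s₁ := f.support))
      F2 (fun c _ => hF2 c)]
  exact Finset.sum_congr rfl fun c _ => h c

namespace GDeriv

open Finsupp

variable {R : Type*} [NonAssocRing R] {G : Type*} [Monoid G] (P : GDeriv R G)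

theorem fixed_pi_apply {r : R} (hr : r ∈ P.fixed) (a b : G) :
    P.π a r b = if a = b then r else 0 := by rw [hr a, Finsupp.single_apply]

theorem zero_mem_fixed : (0 : R) ∈ P.fixed := fun a => by
  rw [P.pi_zero, Finsupp.single_zero]

theorem one_mem_fixed : (1 : R) ∈ P.fixed := fun a => P.d2 a

theorem fixedS_apply {u : G →₀ R} (hu : u ∈ P.fixedS) (c : G) : u c ∈ P.fixed := hu c

theorem mul_single_fixed {u : G →₀ R} (hu : u ∈ P.fixedS) (p : G) (r : R) :
    P.mul (Finsupp.single p r) u = u.sum fun a x => Finsupp.single (p * a) (r * x) := by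
  rw [mul_def, Finsupp.sum_single_index]
  · apply Finsupp.sum_congr
    intro a _
    rw [hu a p, Finsupp.sum_single_index]
    rw [mul_zero, Finsupp.single_zero]
  · simp

theorem mul_fixed_right {z : G →₀ R} (hz : z ∈ P.fixedS) (v : G →₀ R) :
    P.mul v z = v.sum fun p r => z.sum fun q y => Finsupp.single (p * q) (r * y) := by
  rw [mul_def]
  apply Finsupp.sum_congr
  intro p _
  apply Finsupp.sum_congr
  intro q _
  rw [hz q p, Finsupp.sum_single_index]
  rw [mul_zero, Finsupp.single_zero]

theorem mapDomain_sum' {f : G → G} (X : G →₀ R) (F : G → R → (G →₀ R)) :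
    Finsupp.mapDomain f (X.sum F) = X.sum fun a r => Finsupp.mapDomain f (F a r) :=
  map_sum (Finsupp.mapDomain.addMonoidHom f) _ _

theorem mul_single_shift (X : G →₀ R) (g : G) (t : R) :
    P.mul X (Finsupp.single g t) =
      Finsupp.mapDomain (· * g) (P.mul X (Finsupp.single 1 t)) := by
  rw [P.mul_single_right, P.mul_single_one_right, mapDomain_sum']
  apply Finsupp.sum_congr
  intro a _
  rw [mapDomain_sum']
  apply Finsupp.sum_congr
  intro c _
  rw [Finsupp.mapDomain_single]

theorem mul_mapDomain_shift (X : G →₀ R) (g : G) (Y : G →₀ R) :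
    P.mul X (Finsupp.mapDomain (· * g) Y) =
      Finsupp.mapDomain (· * g) (P.mul X Y) := by
  induction Y using Finsupp.induction_linear with
  | zero => rw [Finsupp.mapDomain_zero, P.mul_zero', Finsupp.mapDomain_zero]
  | add u v hu hv =>
      rw [Finsupp.mapDomain_add, P.mul_add', P.mul_add', hu, hv, Finsupp.mapDomain_add]
  | single q y =>
      rw [Finsupp.mapDomain_single, P.mul_single_right, P.mul_single_right, mapDomain_sum']
      apply Finsupp.sum_congr
      intro a _
      rw [mapDomain_sum']
      apply Finsupp.sum_congr
      intro c _
      rw [Finsupp.mapDomain_single, mul_assoc]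

theorem mul_single_pair_one (a b : G) (r t : R) :
    P.mul (Finsupp.single (a * b) r) (Finsupp.single 1 t) =
      (P.π b t).sum fun q z => (P.π a z).sum fun p y =>
        Finsupp.single (p * q) (r * y) := by
  have h0 : ∀ c : G, Finsupp.single (c * 1) (r * 0) = 0 := by
    intro c; rw [mul_zero, Finsupp.single_zero]
  have h1 : ∀ (c : G) (t1 t2 : R), Finsupp.single (c * 1) (r * (t1 + t2)) =
      Finsupp.single (c * 1) (r * t1) + Finsupp.single (c * 1) (r * t2) := by
    intro c t1 t2; rw [mul_add, Finsupp.single_add]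
  rw [P.mul_single_single, P.d4, Finsupp.sum_sum_index h0 h1]
  apply Finsupp.sum_congr; intro q _
  rw [Finsupp.sum_sum_index h0 h1]
  apply Finsupp.sum_congr; intro p _
  rw [Finsupp.sum_single_index (h0 (p * q)), mul_one]

end GDeriv


/-- Membership of a finite sum in an additively closed set. -/
theorem mem_finsupp_sum {M N : Type*} [AddCommMonoid M] [Zero N] {J : Set M}
    (h0 : (0 : M) ∈ J) (hadd : ∀ x ∈ J, ∀ y ∈ J, x + y ∈ J) {α : Type*} (f : α →₀ N)
    (F : α → N → M) (h : ∀ a ∈ f.support, F a (f a) ∈ J) : f.sum F ∈ J := by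
  classical
  exact Finset.sum_induction _ (fun x => x ∈ J) (fun a b ha hb => hadd a ha b hb) h0 h

namespace GDeriv

open Finsupp

variable {R : Type*} [NonAssocRing R] {G : Type*} [Monoid G] (P : GDeriv R G)

theorem mul_apply_mem {J : Set R} (h0 : (0 : R) ∈ J)
    (hadd : ∀ x ∈ J, ∀ y ∈ J, x + y ∈ J) (u v : G →₀ R)
    (H : ∀ a b c : G, u a * P.π a (v b) c ∈ J) (g : G) : (P.mul u v) g ∈ J := by
  classical
  rw [mul_def, Finsupp.sum_apply]
  refine mem_finsupp_sum h0 hadd u _ fun a _ => ?_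
  rw [Finsupp.sum_apply]
  refine mem_finsupp_sum h0 hadd v _ fun b _ => ?_
  rw [Finsupp.sum_apply]
  refine mem_finsupp_sum h0 hadd _ _ fun c _ => ?_
  rw [Finsupp.single_apply]
  split_ifs
  · exact H a b c
  · exact h0

theorem ssimple_rsimple (hS : P.SSimple) : P.RSimple := by
  classical
  intro J hJ hInv
  set Jhat : Set (G →₀ R) := {u | ∀ c, u c ∈ J} with hJhatdef
  have hsingle : ∀ (c : G) (r : R), r ∈ J → Finsupp.single c r ∈ Jhat := by
    intro c r hr g
    rw [Finsupp.single_apply]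
    split_ifs
    · exact hr
    · exact hJ.zero_mem
  have hideal : IsIdealWith P.mul Jhat := by
    constructor
    · intro c; exact hJ.zero_mem
    · intro x y hx hy c
      rw [Finsupp.add_apply]; exact hJ.add_mem (hx c) (hy c)
    · intro x hx c
      rw [Finsupp.neg_apply]; exact hJ.neg_mem (hx c)
    · intro r x hx g
      refine P.mul_apply_mem hJ.zero_mem (fun a ha b hb => hJ.add_mem ha hb) r x
        (fun a b c => ?_) g
      exact hJ.mul_mem_left _ (hInv a c _ (hx b))
    · intro x r hx g
      refine P.mul_apply_mem hJ.zero_mem (fun a ha b hb => hJ.add_mem ha hb) x r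
        (fun a b c => ?_) g
      exact hJ.mul_mem_right _ (hx a)
  have hinv : ∀ a b : G, ∀ x ∈ Jhat, P.ext a b x ∈ Jhat := by
    intro a b x hx c
    rw [P.ext_apply]
    exact hInv a b _ (hx c)
  rcases hS Jhat hideal hinv with h0 | huniv
  · left
    ext r
    simp only [Set.mem_singleton_iff]
    constructor
    · intro hr
      have : Finsupp.single 1 r ∈ Jhat := hsingle 1 r hr
      rw [h0] at this
      have h1 : (Finsupp.single 1 r : G →₀ R) = 0 := this
      have := congrArg (fun f : G →₀ R => f 1) h1
      simpa using this
    · rintro rfl; exact hJ.zero_mem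
  · right
    ext r
    simp only [Set.mem_univ, iff_true]
    have : Finsupp.single 1 r ∈ Jhat := huniv ▸ Set.mem_univ _
    have := this 1
    simpa using this

/-! ### Facts about the center and `Z(S)^G` -/

theorem mem_Z_iff {u : G →₀ R} : u ∈ P.Z ↔ (∀ v, P.mul u v = P.mul v u) ∧
    (∀ v w, P.mul (P.mul u v) w = P.mul u (P.mul v w)) ∧
    (∀ v w, P.mul (P.mul v u) w = P.mul v (P.mul u w)) ∧
    (∀ v w, P.mul (P.mul v w) u = P.mul v (P.mul w u)) := by
  constructor
  · rintro ⟨h1, ⟨h2, h3⟩, h4⟩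
    exact ⟨h1, fun v w => sub_eq_zero.mp (h2 v w), fun v w => sub_eq_zero.mp (h3 v w),
      fun v w => sub_eq_zero.mp (h4 v w)⟩
  · rintro ⟨h1, h2, h3, h4⟩
    exact ⟨h1, ⟨fun v w => sub_eq_zero.mpr (h2 v w), fun v w => sub_eq_zero.mpr (h3 v w)⟩,
      fun v w => sub_eq_zero.mpr (h4 v w)⟩

theorem ext_zero (a b : G) : P.ext a b 0 = 0 := by
  rw [ext_def, Finsupp.sum_zero_index]

theorem ext_neg (a b : G) (u : G →₀ R) : P.ext a b (-u) = -P.ext a b u := by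
  have := P.ext_sub a b 0 u
  rw [zero_sub, P.ext_zero, zero_sub] at this
  exact this

theorem ext_single (a b c : G) (r : R) :
    P.ext a b (Finsupp.single c r) = Finsupp.single c (P.π a r b) := by
  rw [ext_def, Finsupp.sum_single_index]
  rw [P.pi_zero_apply, Finsupp.single_zero]

theorem ext_one (a b : G) : P.ext a b P.one = if a = b then P.one else 0 := by
  rw [one, P.ext_single]
  have : P.π a (1 : R) b = if a = b then 1 else 0 := by
    rw [P.d2, Finsupp.single_apply]
  rw [this]
  split_ifs
  · rfl
  · rw [Finsupp.single_zero]

theorem one_mem_ZG : P.one ∈ P.ZG := by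
  refine ⟨P.mem_Z_iff.mpr ⟨?_, ?_, ?_, ?_⟩, P.ext_one⟩
  · intro v; rw [P.one_mul', P.mul_one']
  · intro v w; rw [P.one_mul', P.one_mul']
  · intro v w; rw [P.mul_one', P.one_mul']
  · intro v w; rw [P.mul_one', P.mul_one']

theorem ZG_add_mem {x y : G →₀ R} (hx : x ∈ P.ZG) (hy : y ∈ P.ZG) : x + y ∈ P.ZG := by
  obtain ⟨hxZ, hxe⟩ := hx
  obtain ⟨hyZ, hye⟩ := hy
  rw [mem_Z_iff] at hxZ hyZ
  refine ⟨P.mem_Z_iff.mpr ⟨?_, ?_, ?_, ?_⟩, ?_⟩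
  · intro v
    rw [P.add_mul', P.mul_add', hxZ.1 v, hyZ.1 v]
  · intro v w
    rw [P.add_mul', P.add_mul', P.add_mul', hxZ.2.1 v w, hyZ.2.1 v w]
  · intro v w
    rw [P.mul_add' v x y, P.add_mul' (P.mul v x) (P.mul v y) w, hxZ.2.2.1 v w,
      hyZ.2.2.1 v w, P.add_mul' x y w, P.mul_add' v (P.mul x w) (P.mul y w)]
  · intro v w
    rw [P.mul_add' (P.mul v w) x y, hxZ.2.2.2 v w, hyZ.2.2.2 v w, P.mul_add' w x y,
      P.mul_add' v (P.mul w x) (P.mul w y)]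
  · intro a b
    rw [P.ext_add, hxe a b, hye a b]
    split_ifs
    · rfl
    · rw [add_zero]

theorem ZG_neg_mem {x : G →₀ R} (hx : x ∈ P.ZG) : -x ∈ P.ZG := by
  obtain ⟨hxZ, hxe⟩ := hx
  rw [mem_Z_iff] at hxZ
  refine ⟨P.mem_Z_iff.mpr ⟨?_, ?_, ?_, ?_⟩, ?_⟩
  · intro v
    rw [P.neg_mul', P.mul_neg', hxZ.1 v]
  · intro v w
    rw [P.neg_mul', P.neg_mul', P.neg_mul', hxZ.2.1 v w]
  · intro v w
    rw [P.mul_neg' v x, P.neg_mul' (P.mul v x) w, hxZ.2.2.1 v w, P.neg_mul' x w,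
      P.mul_neg' v (P.mul x w)]
  · intro v w
    rw [P.mul_neg' (P.mul v w) x, hxZ.2.2.2 v w, P.mul_neg' w x,
      P.mul_neg' v (P.mul w x)]
  · intro a b
    rw [P.ext_neg, hxe a b]
    split_ifs
    · rfl
    · rw [neg_zero]

theorem ZG_fixedS {u : G →₀ R} (hu : u ∈ P.ZG) : u ∈ P.fixedS := by
  intro c a
  ext b
  rw [Finsupp.single_apply]
  have := congrArg (fun f : G →₀ R => f c) (hu.2 a b)
  rw [P.ext_apply] at this
  split_ifs at this ⊢ with hab
  · exact this
  · rw [this]; rfl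

theorem fixed_add {r s : R} (hr : r ∈ P.fixed) (hs : s ∈ P.fixed) : r + s ∈ P.fixed := by
  intro a
  rw [P.d3, hr a, hs a, Finsupp.single_add]

theorem fixed_mul (hst : P.Strong) {r s : R} (hr : r ∈ P.fixed) (hs : s ∈ P.fixed) :
    r * s ∈ P.fixed := by
  intro a
  ext b
  rw [Finsupp.single_apply]
  rcases hst with h7 | h8
  · rw [h7 a b r hr s, P.fixed_pi_apply hs a b]
    split_ifs
    · rfl
    · rw [mul_zero]
  · rw [h8 a b r s hs, P.fixed_pi_apply hr a b]
    split_ifs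
    · rfl
    · rw [zero_mul]

theorem fixedS_mul (hst : P.Strong) {u v : G →₀ R} (hu : u ∈ P.fixedS)
    (hv : v ∈ P.fixedS) : P.mul u v ∈ P.fixedS := by
  intro g
  refine P.mul_apply_mem P.zero_mem_fixed (fun x hx y hy => P.fixed_add hx hy) u v
    (fun a b c => ?_) g
  rw [P.fixed_pi_apply (hv b) a c]
  split_ifs
  · exact P.fixed_mul hst (hu a) (hv b)
  · rw [mul_zero]; exact P.zero_mem_fixed

theorem fixedS_ext {u : G →₀ R} (hu : u ∈ P.fixedS) (a b : G) :
    P.ext a b u = if a = b then u else 0 := by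
  ext g
  rw [P.ext_apply, P.fixed_pi_apply (hu g) a b]
  split_ifs
  · rfl
  · rfl

theorem Z_mul_mem {u v : G →₀ R} (hu : u ∈ P.Z) (hv : v ∈ P.Z) : P.mul u v ∈ P.Z := by
  rw [mem_Z_iff] at hu hv ⊢
  obtain ⟨uC, uNl, uNm, uNr⟩ := hu
  obtain ⟨vC, vNl, vNm, vNr⟩ := hv
  refine ⟨?_, ?_, ?_, ?_⟩
  · intro w
    rw [uNl v w, vC w, ← uNl w v, uC w, uNm w v]
  · intro x y
    rw [uNl v x, uNl (P.mul v x) y, vNl x y, ← uNl v (P.mul x y)]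
  · intro x y
    rw [← uNm x v, vNm (P.mul x u) y, uNm x (P.mul v y), ← uNl v y]
  · intro x y
    rw [← uNm (P.mul x y) v, uNr x y, vNr x (P.mul y u), uNm y v]

theorem ZG_mul_mem (hst : P.Strong) {u v : G →₀ R} (hu : u ∈ P.ZG) (hv : v ∈ P.ZG) :
    P.mul u v ∈ P.ZG :=
  ⟨P.Z_mul_mem hu.1 hv.1,
    P.fixedS_ext (P.fixedS_mul hst (P.ZG_fixedS hu) (P.ZG_fixedS hv))⟩

/-- extension commutes with right multiplication by a fixed central element. -/
theorem ext_mul_fixed (h : P.RightLinear ∨ (P.LeftLinear ∧ P.Commutes))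
    {z : G →₀ R} (hzf : z ∈ P.fixedS) (hzC : ∀ v, P.mul z v = P.mul v z)
    (a b : G) (v : G →₀ R) :
    P.ext a b (P.mul v z) = P.mul (P.ext a b v) z := by
  classical
  have extsum : ∀ (X : G →₀ R) (F : G → R → (G →₀ R)),
      P.ext a b (X.sum F) = X.sum fun p r => P.ext a b (F p r) := fun X F =>
    map_sum (AddMonoidHom.mk' (P.ext a b) (P.ext_add a b)) _ _
  rcases h with h8 | ⟨h7, hco⟩
  · have h0 : ∀ p : G, (z.sum fun q y => Finsupp.single (p * q) ((0 : R) * y)) = 0 := by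
      intro p
      simp [zero_mul]
    have h1 : ∀ (p : G) (r1 r2 : R),
        (z.sum fun q y => Finsupp.single (p * q) ((r1 + r2) * y)) =
          (z.sum fun q y => Finsupp.single (p * q) (r1 * y)) +
            (z.sum fun q y => Finsupp.single (p * q) (r2 * y)) := by
      intro p r1 r2
      rw [← Finsupp.sum_add]
      apply Finsupp.sum_congr
      intro q _
      rw [add_mul, Finsupp.single_add]
    have L : P.ext a b (P.mul v z) = v.sum fun p r =>
        z.sum fun q y => Finsupp.single (p * q) (P.π a r b * y) := by
      rw [P.mul_fixed_right hzf v, extsum]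
      apply Finsupp.sum_congr
      intro p _
      rw [extsum]
      apply Finsupp.sum_congr
      intro q _
      rw [P.ext_single, h8 a b (v p) (z q) (hzf q)]
    have Rr : P.mul (P.ext a b v) z = v.sum fun p r =>
        z.sum fun q y => Finsupp.single (p * q) (P.π a r b * y) := by
      rw [P.mul_fixed_right hzf (P.ext a b v), ext_def,
        Finsupp.sum_sum_index h0 h1]
      apply Finsupp.sum_congr
      intro p _
      rw [Finsupp.sum_single_index (h0 p)]
    rw [L, Rr]
  · have h0 : ∀ (p : G) (r : R) (q : G),
        ((P.π p (0 : R)).sum fun c t => Finsupp.single (c * q) (r * t)) = 0 := by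
      intro p r q
      rw [P.pi_zero, Finsupp.sum_zero_index]
    have h1 : ∀ (p : G) (r : R) (q : G) (s1 s2 : R),
        ((P.π p (s1 + s2)).sum fun c t => Finsupp.single (c * q) (r * t)) =
          ((P.π p s1).sum fun c t => Finsupp.single (c * q) (r * t)) +
            ((P.π p s2).sum fun c t => Finsupp.single (c * q) (r * t)) := by
      intro p r q s1 s2
      rw [P.d3]
      apply Finsupp.sum_add_index' <;> intro c
      · rw [mul_zero, Finsupp.single_zero]
      · intro t1 t2
        rw [mul_add, Finsupp.single_add]
    have L : P.ext a b (P.mul z v) = z.sum fun p r => v.sum fun q s =>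
        (P.π p (P.π a s b)).sum fun c t => Finsupp.single (c * q) (r * t) := by
      rw [mul_def, extsum]
      apply Finsupp.sum_congr
      intro p _
      rw [extsum]
      apply Finsupp.sum_congr
      intro q _
      rw [extsum]
      refine Finsupp.sum_congr_ext (P.π p (v q)) (P.π p (P.π a (v q) b))
        (fun c t => P.ext a b (Finsupp.single (c * q) (z p * t)))
        (fun c t => Finsupp.single (c * q) (z p * t)) ?_ ?_ ?_
      · intro c
        show P.ext a b (Finsupp.single (c * q) (z p * 0)) = 0
        rw [mul_zero, Finsupp.single_zero, P.ext_zero]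
      · intro c
        show Finsupp.single (c * q) (z p * (0 : R)) = 0
        rw [mul_zero, Finsupp.single_zero]
      · intro c
        show P.ext a b (Finsupp.single (c * q) (z p * P.π p (v q) c)) =
          Finsupp.single (c * q) (z p * P.π p (P.π a (v q) b) c)
        rw [P.ext_single, h7 a b (z p) (hzf p) (P.π p (v q) c), hco a b p c (v q)]
    have Rr : P.mul z (P.ext a b v) = z.sum fun p r => v.sum fun q s =>
        (P.π p (P.π a s b)).sum fun c t => Finsupp.single (c * q) (r * t) := by
      rw [mul_def]
      apply Finsupp.sum_congr
      intro p _
      rw [ext_def, Finsupp.sum_sum_index (h0 p (z p)) (h1 p (z p))]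
      apply Finsupp.sum_congr
      intro q _
      rw [Finsupp.sum_single_index (h0 p (z p) q)]
    rw [← hzC v, ← hzC (P.ext a b v), L, Rr]

theorem ssimple_field (hst : P.Strong) (h : P.RightLinear ∨ (P.LeftLinear ∧ P.Commutes))
    (hS : P.SSimple) : IsFieldWith P.mul P.one P.ZG := by
  classical
  refine ⟨P.one_mem_ZG, fun x hx y hy => P.ZG_add_mem hx hy, fun x hx => P.ZG_neg_mem hx,
    fun x hx y hy => P.ZG_mul_mem hst hx hy, fun x hx y hy => hx.1.1 y, ?_⟩
  intro z hz hz0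
  obtain ⟨hzZ, hze⟩ := hz
  have hzfix : z ∈ P.fixedS := P.ZG_fixedS ⟨hzZ, hze⟩
  rw [mem_Z_iff] at hzZ
  obtain ⟨zC, zNl, zNm, zNr⟩ := hzZ
  set Sz : Set (G →₀ R) := {x | ∃ v, x = P.mul v z} with hSzdef
  have hideal : IsIdealWith P.mul Sz := by
    constructor
    · exact ⟨0, (P.zero_mul' z).symm⟩
    · rintro x y ⟨vx, rfl⟩ ⟨vy, rfl⟩; exact ⟨vx + vy, (P.add_mul' vx vy z).symm⟩
    · rintro x ⟨vx, rfl⟩; exact ⟨-vx, (P.neg_mul' vx z).symm⟩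
    · rintro r x ⟨vx, rfl⟩
      exact ⟨P.mul r vx, (zNr r vx).symm⟩
    · rintro x r ⟨vx, rfl⟩
      refine ⟨P.mul vx r, ?_⟩
      rw [← zC vx, zNl vx r, zC (P.mul vx r)]
  have hinv : ∀ a b : G, ∀ x ∈ Sz, P.ext a b x ∈ Sz := by
    rintro a b x ⟨vx, rfl⟩
    exact ⟨P.ext a b vx, P.ext_mul_fixed h hzfix zC a b vx⟩
  rcases hS Sz hideal hinv with h0 | huniv
  · exfalso
    have hzmem : z ∈ Sz := ⟨P.one, (P.one_mul' z).symm⟩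
    rw [h0] at hzmem
    exact hz0 hzmem
  · have honemem : P.one ∈ Sz := by rw [huniv]; trivial
    obtain ⟨w, hw⟩ := honemem
    have hwz : P.mul w z = P.one := hw.symm
    have hzw : P.mul z w = P.one := by rw [zC w, hwz]
    have hinj : ∀ x y : G →₀ R, P.mul z x = P.mul z y → x = y := by
      intro x y hxy
      calc x = P.mul P.one x := (P.one_mul' x).symm
        _ = P.mul (P.mul w z) x := by rw [hwz]
        _ = P.mul w (P.mul z x) := zNm w x
        _ = P.mul w (P.mul z y) := by rw [hxy]
        _ = P.mul (P.mul w z) y := (zNm w y).symm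
        _ = y := by rw [hwz, P.one_mul']
    have hinjR : ∀ x y : G →₀ R, P.mul x z = P.mul y z → x = y := by
      intro x y hxy
      calc x = P.mul x P.one := (P.mul_one' x).symm
        _ = P.mul x (P.mul z w) := by rw [hzw]
        _ = P.mul (P.mul x z) w := (zNm x w).symm
        _ = P.mul (P.mul y z) w := by rw [hxy]
        _ = y := by rw [zNm y w, hzw, P.mul_one']
    have hwCS : ∀ x, P.mul w x = P.mul x w := by
      intro x
      apply hinj
      rw [← zNl w x, hzw, P.one_mul' x, ← zNl x w, zC x, zNm x w, hzw, P.mul_one' x]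
    have hwNl : ∀ x y, P.mul (P.mul w x) y = P.mul w (P.mul x y) := by
      intro x y
      apply hinj
      rw [← zNl (P.mul w x) y, ← zNl w x, hzw, P.one_mul' x, ← zNl w (P.mul x y), hzw,
        P.one_mul' (P.mul x y)]
    have hwNm : ∀ x y, P.mul (P.mul x w) y = P.mul x (P.mul w y) := by
      intro x y
      apply hinj
      rw [← zNl (P.mul x w) y, ← zNl x w, zC x, zNm x w, hzw, P.mul_one' x,
        ← zNl x (P.mul w y), zC x, zNm x (P.mul w y), ← zNl w y, hzw, P.one_mul' y]
    have hwNr : ∀ x y, P.mul (P.mul x y) w = P.mul x (P.mul y w) := by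
      intro x y
      apply hinj
      rw [← zNl (P.mul x y) w, zC (P.mul x y), zNm (P.mul x y) w, hzw,
        P.mul_one' (P.mul x y), ← zNl x (P.mul y w), zC x, zNm x (P.mul y w), ← zNl y w,
        zC y, zNm y w, hzw, P.mul_one' y]
    have hwext : ∀ a b : G, P.ext a b w = if a = b then w else 0 := by
      intro a b
      have h1 : P.mul (P.ext a b w) z = if a = b then P.one else 0 := by
        rw [← P.ext_mul_fixed h hzfix zC a b w, hwz, P.ext_one]
      have h2 : P.mul (if a = b then w else (0 : G →₀ R)) z =
          if a = b then P.one else 0 := by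
        split_ifs
        · exact hwz
        · exact P.zero_mul' z
      exact hinjR _ _ (h1.trans h2.symm)
    exact ⟨w, ⟨P.mem_Z_iff.mpr ⟨hwCS, hwNl, hwNm, hwNr⟩, hwext⟩, hzw, hwz⟩

end GDeriv


/-- A finite nonempty set has a maximal element with respect to a trichotomous,
transitive, irreflexive relation. -/
theorem finset_rel_max {α : Type*} (lt : α → α → Prop) [IsTrichotomous α lt]
    [IsTrans α lt] [IsIrrefl α lt] (s : Finset α) :
    s.Nonempty → ∃ a ∈ s, ∀ b ∈ s, ¬ lt a b := by
  classical
  induction s using Finset.induction with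
  | empty => intro hs; exact absurd hs (by simp)
  | insert c t hx ih =>
    intro _
    rcases t.eq_empty_or_nonempty with rfl | ht
    · refine ⟨c, Finset.mem_insert_self c _, ?_⟩
      intro b hb
      rw [Finset.mem_insert] at hb
      rcases hb with hbe | hb
      · rw [hbe]; exact irrefl_of lt c
      · exact absurd hb (Finset.notMem_empty b)
    · obtain ⟨a, ha, hmaxa⟩ := ih ht
      rcases trichotomous_of lt a c with hac | hae | hca
      · refine ⟨c, Finset.mem_insert_self c t, ?_⟩
        intro b hb
        rw [Finset.mem_insert] at hb
        rcases hb with hbe | hb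
        · rw [hbe]; exact irrefl_of lt c
        · intro hcb
          exact hmaxa b hb (trans_of lt hac hcb)
      · refine ⟨c, Finset.mem_insert_self c t, ?_⟩
        intro b hb
        rw [Finset.mem_insert] at hb
        rcases hb with hbe | hb
        · rw [hbe]; exact irrefl_of lt c
        · rw [← hae]; exact hmaxa b hb
      · refine ⟨a, Finset.mem_insert_of_mem ha, ?_⟩
        intro b hb
        rw [Finset.mem_insert] at hb
        rcases hb with hbe | hb
        · rw [hbe]
          intro hac2
          exact irrefl_of lt a (trans_of lt hac2 hca)
        · exact hmaxa b hb

theorem fsum_eq {α M N : Type*} [Zero M] [AddCommMonoid N] (f : α →₀ M)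
    (F : α → M → N) : f.sum F = ∑ a ∈ f.support, F a (f a) := rfl

namespace GDeriv

open Finsupp

variable {R : Type*} [NonAssocRing R] {G : Type*} [Monoid G] (P : GDeriv R G)

theorem mull_sum (v : G →₀ R) (Y : G →₀ R) (F : G → R → (G →₀ R)) :
    P.mul (Y.sum F) v = Y.sum fun a r => P.mul (F a r) v :=
  map_sum (P.mulL v) _ _

theorem mulr_sum (v : G →₀ R) (Y : G →₀ R) (F : G → R → (G →₀ R)) :
    P.mul v (Y.sum F) = Y.sum fun a r => P.mul v (F a r) :=
  map_sum (P.mulR v) _ _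

theorem mapDomain_finset_sum {f : G → G} {ι : Type*} (s : Finset ι) (F : ι → (G →₀ R)) :
    Finsupp.mapDomain f (∑ i ∈ s, F i) = ∑ i ∈ s, Finsupp.mapDomain f (F i) :=
  map_sum (Finsupp.mapDomain.addMonoidHom f) F s

end GDeriv

namespace GDeriv

open Finsupp

variable {R : Type*} [NonAssocRing R] {G : Type*} [CommMonoid G] (P : GDeriv R G)

theorem mk_D8S (h : P.RightLinear ∨ (P.LeftLinear ∧ P.Commutes)) {U : G →₀ R}
    (hUfix : U ∈ P.fixedS)
    (hstar : ∀ (s : R) (g : G), (∑ a ∈ U.support, U a * P.π a s g) = s * U g)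
    (b : G) (t : R) (p : G) :
    P.π b (t * U p) = (P.π b t).sum fun q z => Finsupp.single q (z * U p) := by
  classical
  have hterm : ∀ q : G, P.π b (t * U p) q = P.π b t q * U p := by
    intro q
    rcases h with h8 | ⟨h7, hco⟩
    · exact h8 b q t (U p) (hUfix p)
    · calc P.π b (t * U p) q = P.π b (∑ a ∈ U.support, U a * P.π a t p) q := by
            rw [hstar t p]
        _ = ∑ a ∈ U.support, P.π b (U a * P.π a t p) q := P.pi_finset_sum b _ _ q
        _ = ∑ a ∈ U.support, U a * P.π a (P.π b t q) p := by
            apply Finset.sum_congr rfl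
            intro a _
            rw [h7 b q (U a) (hUfix a) (P.π a t p), hco b q a p t]
        _ = P.π b t q * U p := hstar (P.π b t q) p
  ext q
  rw [hterm q]
  exact (sum_single_apply (P.π b t) (fun _ z => z * U p) (fun _ => zero_mul _) q).symm

theorem fix_CS {U : G →₀ R} (hUfix : U ∈ P.fixedS)
    (hA2 : ∀ s : R, P.mul (Finsupp.single 1 s) U = P.mul U (Finsupp.single 1 s)) :
    ∀ v, P.mul U v = P.mul v U := by
  have hsingle : ∀ (b : G) (s : R),
      P.mul U (Finsupp.single b s) = P.mul (Finsupp.single b s) U := by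
    intro b s
    rw [P.mul_single_shift, ← hA2 s, P.single_one_mul, P.mul_single_fixed hUfix,
      mapDomain_sum']
    apply Finsupp.sum_congr
    intro a _
    rw [Finsupp.mapDomain_single, mul_comm]
  intro v
  induction v using Finsupp.induction_linear with
  | zero => rw [P.mul_zero', P.zero_mul']
  | add x y hx hy => rw [P.mul_add', P.add_mul', hx, hy]
  | single b s => exact hsingle b s

theorem core_mid {U : G →₀ R} (hUfix : U ∈ P.fixedS)
    (hA2 : ∀ s : R, P.mul (Finsupp.single 1 s) U = P.mul U (Finsupp.single 1 s))
    (hA3 : ∀ s z : R, P.mul (P.mul (Finsupp.single 1 s) U) (Finsupp.single 1 z) =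
      P.mul (Finsupp.single 1 s) (P.mul U (Finsupp.single 1 z)))
    (hD8S : ∀ (b : G) (t : R) (p : G),
      P.π b (t * U p) = (P.π b t).sum fun q z => Finsupp.single q (z * U p))
    (b : G) (s t : R) :
    P.mul (P.mul (Finsupp.single b s) U) (Finsupp.single 1 t) =
      P.mul (Finsupp.single b s) (P.mul U (Finsupp.single 1 t)) := by
  classical
  have eY : ∀ z : R, P.mul (Finsupp.single 1 s) (P.mul U (Finsupp.single 1 z)) =
      ∑ p ∈ U.support, Finsupp.single p (s * (z * U p)) := by
    intro z
    rw [← hA2 z, P.single_one_mul z U, P.mulr_sum, fsum_eq]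
    apply Finset.sum_congr rfl
    intro p _
    rw [P.single_one_mul s (Finsupp.single p (z * U p)), Finsupp.sum_single_index]
    rw [mul_zero, Finsupp.single_zero]
  have eL : ∀ (q : G) (z : R),
      (∑ a ∈ U.support, (P.π a z).sum fun p y =>
        Finsupp.single (p * q) ((s * U a) * y)) =
        ∑ p ∈ U.support, Finsupp.single (p * q) (s * (z * U p)) := by
    intro q z
    have e1 : (∑ a ∈ U.support, (P.π a z).sum fun p y =>
        Finsupp.single (p * q) ((s * U a) * y)) =
        Finsupp.mapDomain (· * q)
          (P.mul (P.mul (Finsupp.single 1 s) U) (Finsupp.single 1 z)) := by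
      rw [P.single_one_mul s U, P.mull_sum, mapDomain_sum', fsum_eq]
      apply Finset.sum_congr rfl
      intro a _
      rw [P.mul_single_single, mapDomain_sum']
      apply Finsupp.sum_congr
      intro p _
      rw [Finsupp.mapDomain_single, mul_one]
    have e2 : Finsupp.mapDomain (· * q)
        (P.mul (Finsupp.single 1 s) (P.mul U (Finsupp.single 1 z))) =
        ∑ p ∈ U.support, Finsupp.single (p * q) (s * (z * U p)) := by
      rw [eY z, mapDomain_finset_sum]
      apply Finset.sum_congr rfl
      intro p _
      rw [Finsupp.mapDomain_single]
    rw [e1, hA3 s z, e2]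
  have L2 : P.mul (P.mul (Finsupp.single b s) U) (Finsupp.single 1 t) =
      ∑ q ∈ (P.π b t).support, ∑ a ∈ U.support,
        (P.π a ((P.π b t) q)).sum fun p y =>
          Finsupp.single (p * q) ((s * U a) * y) := by
    rw [P.mul_single_fixed hUfix, P.mull_sum, fsum_eq]
    refine (Finset.sum_congr rfl fun a _ => ?_).trans Finset.sum_comm
    rw [mul_comm b a]
    exact P.mul_single_pair_one a b (s * U a) t
  have R1 : P.mul (Finsupp.single b s) (P.mul U (Finsupp.single 1 t)) =
      ∑ p ∈ U.support, ∑ q ∈ (P.π b t).support,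
        Finsupp.single (q * p) (s * ((P.π b t) q * U p)) := by
    have hh0 : ∀ (p q' : G), Finsupp.single (q' * p) (s * (0 : R)) = 0 := by
      intro p q'
      rw [mul_zero, Finsupp.single_zero]
    have hh1 : ∀ (p q' : G) (w1 w2 : R),
        Finsupp.single (q' * p) (s * (w1 + w2)) =
          Finsupp.single (q' * p) (s * w1) + Finsupp.single (q' * p) (s * w2) := by
      intro p q' w1 w2
      rw [mul_add, Finsupp.single_add]
    rw [← hA2 t, P.single_one_mul t U, P.mulr_sum, fsum_eq]
    apply Finset.sum_congr rfl
    intro p _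
    rw [P.mul_single_single, hD8S b t p, Finsupp.sum_sum_index (hh0 p) (hh1 p), fsum_eq]
    apply Finset.sum_congr rfl
    intro q _
    rw [Finsupp.sum_single_index (hh0 p q)]
  calc P.mul (P.mul (Finsupp.single b s) U) (Finsupp.single 1 t)
      = ∑ q ∈ (P.π b t).support, ∑ a ∈ U.support,
          (P.π a ((P.π b t) q)).sum fun p y =>
            Finsupp.single (p * q) ((s * U a) * y) := L2
    _ = ∑ q ∈ (P.π b t).support, ∑ p ∈ U.support,
          Finsupp.single (p * q) (s * ((P.π b t) q * U p)) :=
        Finset.sum_congr rfl fun q _ => eL q ((P.π b t) q)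
    _ = ∑ q ∈ (P.π b t).support, ∑ p ∈ U.support,
          Finsupp.single (q * p) (s * ((P.π b t) q * U p)) := by
        apply Finset.sum_congr rfl
        intro q _
        apply Finset.sum_congr rfl
        intro p _
        rw [mul_comm p q]
    _ = ∑ p ∈ U.support, ∑ q ∈ (P.π b t).support,
          Finsupp.single (q * p) (s * ((P.π b t) q * U p)) := Finset.sum_comm
    _ = P.mul (Finsupp.single b s) (P.mul U (Finsupp.single 1 t)) := R1.symm

theorem core_nr {U : G →₀ R} (hUfix : U ∈ P.fixedS)
    (hd1 : ∀ (s t : R) (g : G), (s * t) * U g = s * (t * U g))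
    (hD8S : ∀ (b : G) (t : R) (p : G),
      P.π b (t * U p) = (P.π b t).sum fun q z => Finsupp.single q (z * U p))
    (b g : G) (s t : R) :
    P.mul (P.mul (Finsupp.single b s) (Finsupp.single g t)) U =
      P.mul (Finsupp.single b s) (P.mul (Finsupp.single g t) U) := by
  classical
  have L : P.mul (P.mul (Finsupp.single b s) (Finsupp.single g t)) U =
      ∑ d ∈ (P.π b t).support, ∑ a ∈ U.support,
        Finsupp.single (d * g * a) ((s * (P.π b t) d) * U a) := by
    rw [P.mul_single_single, P.mull_sum, fsum_eq]
    apply Finset.sum_congr rfl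
    intro d _
    rw [P.mul_single_fixed hUfix, fsum_eq]
  have Rr : P.mul (Finsupp.single b s) (P.mul (Finsupp.single g t) U) =
      ∑ a ∈ U.support, ∑ d ∈ (P.π b t).support,
        Finsupp.single (d * (g * a)) (s * ((P.π b t) d * U a)) := by
    have hh0 : ∀ (a d' : G), Finsupp.single (d' * (g * a)) (s * (0 : R)) = 0 := by
      intro a d'
      rw [mul_zero, Finsupp.single_zero]
    have hh1 : ∀ (a d' : G) (w1 w2 : R),
        Finsupp.single (d' * (g * a)) (s * (w1 + w2)) =
          Finsupp.single (d' * (g * a)) (s * w1) +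
            Finsupp.single (d' * (g * a)) (s * w2) := by
      intro a d' w1 w2
      rw [mul_add, Finsupp.single_add]
    rw [P.mul_single_fixed hUfix, P.mulr_sum, fsum_eq]
    apply Finset.sum_congr rfl
    intro a _
    rw [P.mul_single_single, hD8S b t a, Finsupp.sum_sum_index (hh0 a) (hh1 a), fsum_eq]
    apply Finset.sum_congr rfl
    intro d _
    rw [Finsupp.sum_single_index (hh0 a d)]
  rw [L, Rr]
  refine Finset.sum_comm.trans ?_
  apply Finset.sum_congr rfl
  intro a _
  apply Finset.sum_congr rfl
  intro d _
  rw [mul_assoc d g a, hd1 s ((P.π b t) d) a]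

theorem U_mem_Z {U : G →₀ R} (hUfix : U ∈ P.fixedS)
    (hA2 : ∀ s : R, P.mul (Finsupp.single 1 s) U = P.mul U (Finsupp.single 1 s))
    (hA3 : ∀ s z : R, P.mul (P.mul (Finsupp.single 1 s) U) (Finsupp.single 1 z) =
      P.mul (Finsupp.single 1 s) (P.mul U (Finsupp.single 1 z)))
    (hd1 : ∀ (s t : R) (g : G), (s * t) * U g = s * (t * U g))
    (hD8S : ∀ (b : G) (t : R) (p : G),
      P.π b (t * U p) = (P.π b t).sum fun q z => Finsupp.single q (z * U p)) :
    U ∈ P.Z := by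
  have hUC := P.fix_CS hUfix hA2
  have hNm0 : ∀ (v : G →₀ R) (t : R),
      P.mul (P.mul v U) (Finsupp.single 1 t) =
        P.mul v (P.mul U (Finsupp.single 1 t)) := by
    intro v t
    induction v using Finsupp.induction_linear with
    | zero => rw [P.zero_mul' U, P.zero_mul', P.zero_mul']
    | add x y hx hy =>
        rw [P.add_mul' x y U, P.add_mul' (P.mul x U) (P.mul y U), hx, hy,
          P.add_mul' x y (P.mul U (Finsupp.single 1 t))]
    | single b s => exact P.core_mid hUfix hA2 hA3 hD8S b s t
  have hNm : ∀ v w, P.mul (P.mul v U) w = P.mul v (P.mul U w) := by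
    intro v w
    induction w using Finsupp.induction_linear with
    | zero => rw [P.mul_zero', P.mul_zero' U, P.mul_zero' v]
    | add x y hx hy =>
        rw [P.mul_add' (P.mul v U) x y, hx, hy, P.mul_add' U x y,
          P.mul_add' v (P.mul U x) (P.mul U y)]
    | single g t =>
        rw [P.mul_single_shift (P.mul v U) g t, hNm0 v t, P.mul_single_shift U g t,
          P.mul_mapDomain_shift v g (P.mul U (Finsupp.single 1 t))]
  have hNr : ∀ v w, P.mul (P.mul v w) U = P.mul v (P.mul w U) := by
    intro v w
    induction v using Finsupp.induction_linear with
    | zero => rw [P.zero_mul' w, P.zero_mul' U, P.zero_mul' (P.mul w U)]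
    | add x y hx hy =>
        rw [P.add_mul' x y w, P.add_mul' (P.mul x w) (P.mul y w) U, hx, hy,
          P.add_mul' x y (P.mul w U)]
    | single b s =>
        induction w using Finsupp.induction_linear with
        | zero =>
            rw [P.mul_zero' (Finsupp.single b s), P.zero_mul' U,
              P.mul_zero' (Finsupp.single b s)]
        | add x y hx hy =>
            rw [P.mul_add' (Finsupp.single b s) x y,
              P.add_mul' (P.mul (Finsupp.single b s) x)
                (P.mul (Finsupp.single b s) y) U, hx, hy, P.add_mul' x y U,
              P.mul_add' (Finsupp.single b s) (P.mul x U) (P.mul y U)]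
        | single g t => exact P.core_nr hUfix hd1 hD8S b g s t
  have hNl : ∀ v w, P.mul (P.mul U v) w = P.mul U (P.mul v w) := by
    intro v w
    calc P.mul (P.mul U v) w = P.mul (P.mul v U) w := by rw [hUC v]
      _ = P.mul v (P.mul U w) := hNm v w
      _ = P.mul v (P.mul w U) := by rw [hUC w]
      _ = P.mul (P.mul v w) U := (hNr v w).symm
      _ = P.mul U (P.mul v w) := (hUC (P.mul v w)).symm
  exact P.mem_Z_iff.mpr ⟨hUC, hNl, hNm, hNr⟩

theorem back_ssimple (hu : P.Unital) (hwo : P.WellOrdered)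
    (h : P.RightLinear ∨ (P.LeftLinear ∧ P.Commutes))
    (hR : P.RSimple) (hF : IsFieldWith P.mul P.one P.ZG) : P.SSimple := by
  classical
  intro I hI hInv
  by_cases hI0 : I = {0}
  · exact Or.inl hI0
  right
  -- a nonzero element of I
  have hex : ∃ x, x ∈ I ∧ x ≠ 0 := by
    by_contra hc
    push_neg at hc
    exact hI0 (Set.eq_singleton_iff_unique_mem.mpr ⟨hI.zero_mem, fun x hx => hc x hx⟩)
  obtain ⟨x0, hx0I, hx0⟩ := hex
  have h10 : (1 : R) ≠ 0 := by
    intro h1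
    apply hx0
    ext g
    rw [Finsupp.coe_zero, Pi.zero_apply]
    calc x0 g = x0 g * 1 := (mul_one _).symm
      _ = x0 g * 0 := by rw [h1]
      _ = 0 := mul_zero _
  obtain ⟨lt, hIWO, hltz⟩ := hwo
  haveI := hIWO
  have hwf : WellFounded lt := IsWellFounded.wf
  -- the minimal "top exponent"
  set A : Set G := {a | ∃ v, v ∈ I ∧ v ≠ 0 ∧ a ∈ v.support ∧ ∀ b ∈ v.support, ¬ lt a b}
    with hAdef
  have hAne : A.Nonempty := by
    obtain ⟨a, ha, hamax⟩ :=
      finset_rel_max lt x0.support (Finsupp.support_nonempty_iff.mpr hx0)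
    exact ⟨a, x0, hx0I, hx0, ha, hamax⟩
  set a₀ : G := hwf.min A hAne with ha₀def
  have ha₀min : ∀ a ∈ A, ¬ lt a a₀ := fun a ha => hwf.not_lt_min A ha
  have KEY : ∀ v, v ∈ I → (∀ b, lt a₀ b → v b = 0) → v a₀ = 0 → v = 0 := by
    intro v hvI hvs hva
    by_contra hv0
    obtain ⟨m, hmmem, hmmax⟩ :=
      finset_rel_max lt v.support (Finsupp.support_nonempty_iff.mpr hv0)
    have hmA : m ∈ A := ⟨v, hvI, hv0, hmmem, hmmax⟩
    rcases trichotomous_of lt m a₀ with hlt | heq | hgt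
    · exact ha₀min m hmA hlt
    · exact Finsupp.mem_support_iff.mp hmmem (heq ▸ hva)
    · exact Finsupp.mem_support_iff.mp hmmem (hvs m hgt)
  -- the ideal of leading coefficients
  set J : Set R := {r | ∃ v, v ∈ I ∧ (∀ b, lt a₀ b → v b = 0) ∧ v a₀ = r} with hJdef
  have hJideal : IsIdealWith (· * ·) J := by
    constructor
    · exact ⟨0, hI.zero_mem, fun b _ => rfl, rfl⟩
    · rintro x y ⟨v, hvI, hvs, rfl⟩ ⟨w, hwI, hws, rfl⟩
      refine ⟨v + w, hI.add_mem hvI hwI, ?_, ?_⟩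
      · intro b hb
        rw [Finsupp.add_apply, hvs b hb, hws b hb, add_zero]
      · rw [Finsupp.add_apply]
    · rintro x ⟨v, hvI, hvs, rfl⟩
      refine ⟨-v, hI.neg_mem hvI, ?_, ?_⟩
      · intro b hb
        rw [Finsupp.neg_apply, hvs b hb, neg_zero]
      · rw [Finsupp.neg_apply]
    · rintro r x ⟨v, hvI, hvs, rfl⟩
      refine ⟨P.mul (Finsupp.single 1 r) v, hI.mul_mem_left _ hvI, ?_, ?_⟩
      · intro b hb
        rw [P.single_one_mul_apply, hvs b hb, mul_zero]
      · rw [P.single_one_mul_apply]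
    · rintro x r ⟨v, hvI, hvs, rfl⟩
      have hnotlt : ∀ a ∈ v.support, ∀ g, lt a₀ g → lt a g := by
        intro a ha g hg
        have hv : ¬ lt a₀ a := fun hcon => Finsupp.mem_support_iff.mp ha (hvs a hcon)
        rcases trichotomous_of lt a a₀ with hlt | heq | hgt
        · exact trans_of lt hlt hg
        · exact heq ▸ hg
        · exact absurd hgt hv
      have hlow : ∀ a ∈ v.support, a ≠ a₀ → lt a a₀ := by
        intro a ha hne
        have hv : ¬ lt a₀ a := fun hcon => Finsupp.mem_support_iff.mp ha (hvs a hcon)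
        rcases trichotomous_of lt a a₀ with hlt | heq | hgt
        · exact hlt
        · exact absurd heq hne
        · exact absurd hgt hv
      refine ⟨P.mul v (Finsupp.single 1 r), hI.mul_mem_right _ hvI, ?_, ?_⟩
      · intro g hg
        rw [P.mul_single_one_right_apply, fsum_eq]
        apply Finset.sum_eq_zero
        intro a ha
        rw [hltz a g (hnotlt a ha g hg) r, mul_zero]
      · rw [P.mul_single_one_right_apply, fsum_eq]
        rw [Finset.sum_eq_single a₀ (fun a ha hne => by
          rw [hltz a a₀ (hlow a ha hne) r, mul_zero])
          (fun hns => by rw [Finsupp.notMem_support_iff.mp hns, zero_mul])]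
        rw [hu a₀ r]
  have hJinv : ∀ a b : G, ∀ r ∈ J, P.π a r b ∈ J := by
    rintro a b r ⟨v, hvI, hvs, rfl⟩
    refine ⟨P.ext a b v, hInv a b v hvI, ?_, ?_⟩
    · intro g hg
      rw [P.ext_apply, hvs g hg, P.pi_zero_apply]
    · rw [P.ext_apply]
  rcases hR J hJideal hJinv with hJ0 | hJuniv
  · exfalso
    obtain ⟨v, hvI, hv0, hvmem, hvmax⟩ := hwf.min_mem A hAne
    have hmem : v a₀ ∈ J := by
      refine ⟨v, hvI, ?_, rfl⟩
      intro b hb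
      by_contra hnb
      exact hvmax b (Finsupp.mem_support_iff.mpr hnb) hb
    rw [hJ0] at hmem
    exact Finsupp.mem_support_iff.mp hvmem hmem
  have h1J : (1 : R) ∈ J := by rw [hJuniv]; trivial
  obtain ⟨U, hUI, hUs, hUa₀⟩ := h1J
  -- basic facts about the element U
  have hUnotlt : ∀ a ∈ U.support, ¬ lt a₀ a :=
    fun a ha hcon => Finsupp.mem_support_iff.mp ha (hUs a hcon)
  have hUlt : ∀ a ∈ U.support, ∀ g, lt a₀ g → lt a g := by
    intro a ha g hg
    rcases trichotomous_of lt a a₀ with hlt | heq | hgt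
    · exact trans_of lt hlt hg
    · exact heq ▸ hg
    · exact absurd hgt (hUnotlt a ha)
  have hUlow : ∀ a ∈ U.support, a ≠ a₀ → lt a a₀ := by
    intro a ha hne
    rcases trichotomous_of lt a a₀ with hlt | heq | hgt
    · exact hlt
    · exact absurd heq hne
    · exact absurd hgt (hUnotlt a ha)
  have ha₀mem : a₀ ∈ U.support := Finsupp.mem_support_iff.mpr (by rw [hUa₀]; exact h10)
  -- harvest A1 : U is fixed coefficientwise
  have hA1a : ∀ a : G, P.ext a a U = U := by
    intro a
    apply sub_eq_zero.mp
    apply KEY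
    · rw [sub_eq_add_neg]
      exact hI.add_mem (hInv a a U hUI) (hI.neg_mem hUI)
    · intro b hb
      rw [Finsupp.sub_apply, P.ext_apply, hUs b hb, P.pi_zero_apply, sub_zero]
    · rw [Finsupp.sub_apply, P.ext_apply, hUa₀, P.d2, Finsupp.single_eq_same, sub_self]
  have hA1b : ∀ a b : G, a ≠ b → P.ext a b U = 0 := by
    intro a b hab
    apply KEY
    · exact hInv a b U hUI
    · intro g hg
      rw [P.ext_apply, hUs g hg, P.pi_zero_apply]
    · rw [P.ext_apply, hUa₀, P.d2, Finsupp.single_apply, if_neg hab]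
  have hUfix : U ∈ P.fixedS := by
    intro c a
    ext b
    rw [Finsupp.single_apply]
    by_cases hab : a = b
    · rw [if_pos hab]
      have := congrArg (fun f : G →₀ R => f c) (hA1a a)
      rw [P.ext_apply] at this
      rw [← hab]
      exact this
    · rw [if_neg hab]
      have := congrArg (fun f : G →₀ R => f c) (hA1b a b hab)
      rw [P.ext_apply] at this
      rw [this, Finsupp.coe_zero, Pi.zero_apply]
  -- harvest A2 : U commutes with coefficients
  have hA2 : ∀ s : R, P.mul (Finsupp.single 1 s) U = P.mul U (Finsupp.single 1 s) := by
    intro s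
    apply sub_eq_zero.mp
    apply KEY
    · rw [sub_eq_add_neg]
      exact hI.add_mem (hI.mul_mem_left _ hUI) (hI.neg_mem (hI.mul_mem_right _ hUI))
    · intro g hg
      rw [Finsupp.sub_apply, P.single_one_mul_apply, P.mul_single_one_right_apply,
        hUs g hg, mul_zero, fsum_eq]
      rw [Finset.sum_eq_zero fun a ha => by
        rw [hltz a g (hUlt a ha g hg) s, mul_zero]]
      rw [sub_zero]
    · rw [Finsupp.sub_apply, P.single_one_mul_apply, P.mul_single_one_right_apply,
        fsum_eq]
      rw [Finset.sum_eq_single a₀ (fun a ha hne => by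
          rw [hltz a a₀ (hUlow a ha hne) s, mul_zero])
        (fun hns => absurd ha₀mem hns)]
      rw [hu a₀ s, hUa₀, mul_one, one_mul, sub_self]
  have hstar : ∀ (s : R) (g : G), (∑ a ∈ U.support, U a * P.π a s g) = s * U g := by
    intro s g
    have hh := congrArg (fun f : G →₀ R => f g) (hA2 s)
    rw [P.single_one_mul_apply, P.mul_single_one_right_apply, fsum_eq] at hh
    exact hh.symm
  -- harvest (†1)
  have hd1 : ∀ (s t : R) (g : G), (s * t) * U g = s * (t * U g) := by
    have key : ∀ s t : R, P.mul (Finsupp.single 1 (s * t)) U =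
        P.mul (Finsupp.single 1 s) (P.mul (Finsupp.single 1 t) U) := by
      intro s t
      apply sub_eq_zero.mp
      apply KEY
      · rw [sub_eq_add_neg]
        exact hI.add_mem (hI.mul_mem_left _ hUI)
          (hI.neg_mem (hI.mul_mem_left _ (hI.mul_mem_left _ hUI)))
      · intro g hg
        rw [Finsupp.sub_apply, P.single_one_mul_apply, P.single_one_mul_apply,
          P.single_one_mul_apply, hUs g hg, mul_zero, mul_zero, mul_zero, sub_zero]
      · rw [Finsupp.sub_apply, P.single_one_mul_apply, P.single_one_mul_apply,
          P.single_one_mul_apply, hUa₀, mul_one, mul_one, sub_self]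
    intro s t g
    have hh := congrArg (fun f : G →₀ R => f g) (key s t)
    rw [P.single_one_mul_apply, P.single_one_mul_apply, P.single_one_mul_apply] at hh
    exact hh
  -- harvest A3
  have hA3 : ∀ s z : R, P.mul (P.mul (Finsupp.single 1 s) U) (Finsupp.single 1 z) =
      P.mul (Finsupp.single 1 s) (P.mul U (Finsupp.single 1 z)) := by
    intro s z
    have hXmem : ∀ a : G, a ∈ (P.mul (Finsupp.single 1 s) U).support → a ∈ U.support := by
      intro a ha
      have hx := Finsupp.mem_support_iff.mp ha
      rw [P.single_one_mul_apply] at hx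
      apply Finsupp.mem_support_iff.mpr
      intro h0
      exact hx (by rw [h0, mul_zero])
    apply sub_eq_zero.mp
    apply KEY
    · rw [sub_eq_add_neg]
      exact hI.add_mem (hI.mul_mem_right _ (hI.mul_mem_left _ hUI))
        (hI.neg_mem (hI.mul_mem_left _ (hI.mul_mem_right _ hUI)))
    · intro g hg
      rw [Finsupp.sub_apply, P.mul_single_one_right_apply, P.single_one_mul_apply,
        P.mul_single_one_right_apply, fsum_eq, fsum_eq]
      rw [Finset.sum_eq_zero fun a ha => by
        rw [hltz a g (hUlt a (hXmem a ha) g hg) z, mul_zero]]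
      rw [Finset.sum_eq_zero fun a ha => by
        rw [hltz a g (hUlt a ha g hg) z, mul_zero]]
      rw [mul_zero, sub_zero]
    · rw [Finsupp.sub_apply, P.mul_single_one_right_apply, P.single_one_mul_apply,
        P.mul_single_one_right_apply, fsum_eq, fsum_eq]
      rw [Finset.sum_eq_single a₀ (fun a ha hne => by
          rw [hltz a a₀ (hUlow a (hXmem a ha) hne) z, mul_zero])
        (fun hns => by rw [Finsupp.notMem_support_iff.mp hns, zero_mul])]
      rw [Finset.sum_eq_single a₀ (fun a ha hne => by
          rw [hltz a a₀ (hUlow a ha hne) z, mul_zero])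
        (fun hns => absurd ha₀mem hns)]
      rw [hu a₀ z, P.single_one_mul_apply, hUa₀, mul_one, one_mul, sub_self]
  -- conclude : U is in Z(S)^G
  have hD8S : ∀ (b : G) (t : R) (p : G),
      P.π b (t * U p) = (P.π b t).sum fun q z => Finsupp.single q (z * U p) :=
    fun b t p => P.mk_D8S h hUfix hstar b t p
  have hUZ : U ∈ P.Z := P.U_mem_Z hUfix hA2 hA3 hd1 hD8S
  have hUZG : U ∈ P.ZG := by
    refine ⟨hUZ, fun a b => ?_⟩
    by_cases hab : a = b
    · rw [if_pos hab, ← hab]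
      exact hA1a a
    · rw [if_neg hab]
      exact hA1b a b hab
  have hU0 : U ≠ 0 := by
    intro h0
    apply h10
    rw [← hUa₀, h0, Finsupp.coe_zero, Pi.zero_apply]
  obtain ⟨y, hyZG, hUy, hyU⟩ := hF.2.2.2.2.2 U hUZG hU0
  have honeI : P.one ∈ I := by
    rw [← hUy]
    exact hI.mul_mem_right y hUI
  apply Set.eq_univ_iff_forall.mpr
  intro v
  have hv := hI.mul_mem_left v honeI
  rwa [P.mul_one'] at hv

end GDeriv

/-- **main theorem.** Let `G` be commutative and `π` a unital
`G`-derivation which is strong and well-ordered.  If (D8) holds, or (D7) holds and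
`π` is commutative, then `S` is `G`-simple iff `R` is `G`-simple and `Z(S)^G` is a
field. -/
theorem stmt12 {R : Type*} [NonAssocRing R] {G : Type*} [CommMonoid G]
    (P : GDeriv R G) (hu : P.Unital) (hst : P.Strong) (hwo : P.WellOrdered)
    (h : P.RightLinear ∨ (P.LeftLinear ∧ P.Commutes)) :
    P.SSimple ↔ P.RSimple ∧ IsFieldWith P.mul P.one P.ZG := by
  constructor
  · intro hS
    exact ⟨P.ssimple_rsimple hS, P.ssimple_field hst h hS⟩
  · rintro ⟨hR, hF⟩
    exact P.back_ssimple hu hwo h hR hF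
end

section
/- Let R be a unital non-associative ring, I a set well-ordered by ≪, and Δ = {δ_i}_{i∈I} a family of additive maps δ_i : R → R with δ_i(1) = 0, and let π^f_g (f,g ∈ ℕ^(I)) be defined by π^f_g(r) = C(f,g)·δ^{f−g}(r) if g ≤ f and π^f_g = 0 otherwise. Then the following are equivalent: (i) π satisfies (D4), i.e. π^{f+g}_h = Σ_{k,l ∈ ℕ^(I) with k+l = h} π^f_k ∘ π^g_l for all f,g,h ∈ ℕ^(I); (ii) π is commutative, i.e. π^f_g ∘ π^h_k = π^h_k ∘ π^f_g for all f,g,h,k ∈ ℕ^(I); (iii) Δ is commutative, i.e. δ_i ∘ δ_j = δ_j ∘ δ_i for all i,j ∈ I. -/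
open scoped Classical

/-- `A` is simple w.r.t. the multiplication `m`: `{0}` and `A` are its only
two-sided ideals. -/
def SimpleWith {A : Type*} [AddCommGroup A] (m : A → A → A) : Prop :=
  ∀ J : Set A, IsIdealWith m J → J = {0} ∨ J = Set.univ

/-- The center of `A` w.r.t. the multiplication `m`: elements commuting with all
elements whose associator with any two elements (in any position) vanishes. -/
def centerWith {A : Type*} [AddCommGroup A] (m : A → A → A) : Set A :=
  {u | (∀ v, m u v = m v u) ∧ (∀ v w, m (m u v) w = m u (m v w)) ∧
       (∀ v w, m (m v u) w = m v (m u w)) ∧ (∀ v w, m (m v w) u = m v (m w u))}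

variable {R : Type*} [NonAssocRing R] {I : Type*} [LinearOrder I]

/-- `δ^f = δ_{i₁}^{f(i₁)} ∘ ⋯ ∘ δ_{iₘ}^{f(iₘ)}` where `i₁ ≪ ⋯ ≪ iₘ` is the support
of `f` listed in increasing order. -/
def deltaPow (δ : I → R → R) (f : I →₀ ℕ) : R → R :=
  ((f.support.sort (· ≤ ·)).map fun i => (δ i)^[f i]).foldr (· ∘ ·) id

/-- `C(f,g) = ∏ᵢ binomial (f i) (g i)` (equal to `0` whenever `g ≰ f`). -/
def binomF (f g : I →₀ ℕ) : ℕ :=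
  ∏ i ∈ f.support ∪ g.support, Nat.choose (f i) (g i)

/-- `π^f_g(r) = C(f,g)·δ^{f-g}(r)` for `g ≤ f`, and `π^f_g = 0` otherwise. -/
noncomputable def piN (δ : I → R → R) (f g : I →₀ ℕ) (r : R) : R :=
  if g ≤ f then (binomF f g) • deltaPow δ (f - g) r else 0

/-- `R_Δ = ⋂ᵢ ker δᵢ`. -/
def RDelta (δ : I → R → R) : Set R := {r | ∀ i : I, δ i r = 0}

/-- `Δ` is a set of left kernel derivations: each `δᵢ` is left `R_Δ`-linear. -/
def LeftKernel (δ : I → R → R) : Prop :=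
  ∀ i : I, ∀ s ∈ RDelta δ, ∀ r : R, δ i (s * r) = s * δ i r

/-- `Δ` is a set of right kernel derivations: each `δᵢ` is right `R_Δ`-linear. -/
def RightKernel (δ : I → R → R) : Prop :=
  ∀ i : I, ∀ r : R, ∀ s ∈ RDelta δ, δ i (r * s) = δ i r * s

/-- `R` is `Δ`-simple: `{0}` and `R` are its only `Δ`-invariant ideals. -/
def DeltaSimple (δ : I → R → R) : Prop :=
  ∀ J : Set R, IsIdealWith (· * ·) J → (∀ i : I, ∀ r ∈ J, δ i r ∈ J) →
    J = {0} ∨ J = Set.univ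

/-- The multiplication of the differential monoid ring `S = R[ℕ^(I); π]` on
`(I →₀ ℕ) →₀ R`: the biadditive extension of
`(r x^f)(s x^g) = Σ_h r π^f_h(s) x^{h+g}`. -/
noncomputable def mulN (δ : I → R → R) (u v : (I →₀ ℕ) →₀ R) : (I →₀ ℕ) →₀ R :=
  u.sum fun f r => v.sum fun g s =>
    ∑ h ∈ Finset.Iic f, Finsupp.single (h + g) (r * piN δ f h s)
set_option linter.unusedSectionVars false

section Stmt13Aux

variable (δ : I → R → R)

private lemma iter_additive {φ : R → R} (h : ∀ r s, φ (r + s) = φ r + φ s) (n : ℕ) (r s : R) :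
    φ^[n] (r + s) = φ^[n] r + φ^[n] s := by
  induction n generalizing r s with
  | zero => simp
  | succ n ih =>
      rw [Function.iterate_succ']
      simp only [Function.comp_apply]
      rw [ih, h]

private lemma foldr_additive (L : List (R → R)) :
    (∀ ψ ∈ L, ∀ r s, ψ (r + s) = ψ r + ψ s) → ∀ r s,
    (L.foldr (· ∘ ·) id) (r + s) = L.foldr (· ∘ ·) id r + L.foldr (· ∘ ·) id s := by
  induction L with
  | nil => intro _ r s; rfl
  | cons φ L ih =>
      intro hL r s
      simp only [List.foldr_cons, Function.comp_apply]
      rw [ih (fun ψ hψ => hL ψ (List.mem_cons_of_mem _ hψ)), hL φ List.mem_cons_self]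

lemma deltaPow_additive (hadd : ∀ (i : I) (r s : R), δ i (r + s) = δ i r + δ i s)
    (f : I →₀ ℕ) (r s : R) :
    deltaPow δ f (r + s) = deltaPow δ f r + deltaPow δ f s := by
  refine foldr_additive _ ?_ r s
  intro ψ hψ
  rw [List.mem_map] at hψ
  obtain ⟨i, -, rfl⟩ := hψ
  exact iter_additive (hadd i) _

lemma deltaPow_map_zero (hadd : ∀ (i : I) (r s : R), δ i (r + s) = δ i r + δ i s)
    (f : I →₀ ℕ) : deltaPow δ f 0 = 0 := by
  have h := deltaPow_additive δ hadd f 0 0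
  rw [add_zero] at h
  exact left_eq_add.mp h

lemma deltaPow_nsmul (hadd : ∀ (i : I) (r s : R), δ i (r + s) = δ i r + δ i s)
    (f : I →₀ ℕ) (n : ℕ) (r : R) : deltaPow δ f (n • r) = n • deltaPow δ f r := by
  induction n with
  | zero => simpa using deltaPow_map_zero δ hadd f
  | succ n ih => rw [succ_nsmul, succ_nsmul, deltaPow_additive δ hadd, ih]

private lemma end_pow_eq_iterate (φ : Function.End R) (n : ℕ) :
    (φ ^ n : Function.End R) = (φ : R → R)^[n] := by
  induction n with
  | zero => rfl
  | succ n ih => rw [pow_succ', ih]; exact (Function.iterate_succ' (f := (φ : R → R)) n).symm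

private lemma end_list_prod_eq_foldr (L : List (Function.End R)) :
    L.prod = (L.foldr (· ∘ ·) id : R → R) := by
  induction L with
  | nil => rfl
  | cons φ L ih => rw [List.prod_cons, ih]; rfl

lemma deltaPow_comp (hc : ∀ i j : I, δ i ∘ δ j = δ j ∘ δ i) (f g : I →₀ ℕ) :
    deltaPow δ (f + g) = deltaPow δ f ∘ deltaPow δ g := by
  classical
  set s : Set (Function.End R) := Set.range (fun i => (δ i : Function.End R)) with hs
  have hcomm : ∀ a ∈ s, ∀ b ∈ s, a * b = b * a := by
    rintro a ⟨i, rfl⟩ b ⟨j, rfl⟩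
    exact hc i j
  letI : CommMonoid (Submonoid.closure s) :=
    Submonoid.closureCommMonoidOfComm (Function.End R) hcomm
  set e : I → Submonoid.closure s := fun i => ⟨δ i, Submonoid.subset_closure ⟨i, rfl⟩⟩ with he
  have key : ∀ h : I →₀ ℕ,
      deltaPow δ h = ((h.prod fun i n => e i ^ n : Submonoid.closure s) : Function.End R) := by
    intro h
    have h1 : ((h.prod fun i n => e i ^ n : Submonoid.closure s) : Function.End R)
        = (((h.support.sort (· ≤ ·)).map fun i => e i ^ h i).map
            ((Submonoid.closure s).subtype)).prod := by
      rw [← map_list_prod]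
      congr 1
      rw [Finsupp.prod, Finset.prod_eq_multiset_prod, ← Finset.sort_eq (s := h.support) (r := (· ≤ ·)),
        Multiset.map_coe, Multiset.prod_coe]
    rw [h1, List.map_map, end_list_prod_eq_foldr]
    show deltaPow δ h = _
    unfold deltaPow
    congr 1
  have hprodadd : ((f + g).prod fun i n => e i ^ n)
      = (f.prod fun i n => e i ^ n) * (g.prod fun i n => e i ^ n) := by
    rw [Finsupp.prod_add_index' (h := fun i n => e i ^ n) (fun i => pow_zero _)
      (fun i m n => pow_add _ _ _)]
  rw [key, key, key, hprodadd]
  rfl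

lemma deltaPow_single_one (i : I) : deltaPow δ (Finsupp.single i 1) = δ i := by
  unfold deltaPow
  rw [Finsupp.support_single_ne_zero i one_ne_zero, Finset.sort_singleton]
  simp

lemma binomF_eq_prod {f g : I →₀ ℕ} {s : Finset I} (hf : f.support ⊆ s) (hg : g.support ⊆ s) :
    binomF f g = ∏ i ∈ s, (f i).choose (g i) := by
  refine Finset.prod_subset (Finset.union_subset hf hg) ?_
  intro i _ hi
  have hgi : g i = 0 := by
    by_contra h
    exact hi (Finset.mem_union_right _ (Finsupp.mem_support_iff.mpr h))
  rw [hgi, Nat.choose_zero_right]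

lemma binomF_zero_of_not_le {f g : I →₀ ℕ} (h : ¬ g ≤ f) : binomF f g = 0 := by
  obtain ⟨i, hi⟩ : ∃ i, ¬ g i ≤ f i := by
    by_contra hc
    push_neg at hc
    exact h (Finsupp.le_def.mpr hc)
  refine Finset.prod_eq_zero (i := i) ?_ ?_
  · exact Finset.mem_union_right _ (Finsupp.mem_support_iff.mpr (by omega))
  · exact Nat.choose_eq_zero_of_lt (by omega)

lemma binomF_zero_right (f : I →₀ ℕ) : binomF f 0 = 1 := by
  unfold binomF
  simp

lemma piN_eq (f g : I →₀ ℕ) (r : R) :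
    piN δ f g r = binomF f g • deltaPow δ (f - g) r := by
  unfold piN
  split
  · rfl
  · next h => rw [binomF_zero_of_not_le h, zero_smul]

lemma piN_zero_right (f : I →₀ ℕ) (r : R) : piN δ f 0 r = deltaPow δ f r := by
  rw [piN_eq, binomF_zero_right, tsub_zero, one_smul]

private lemma vandermonde_aux (F : I → ℕ → ℕ → ℕ) (s : Finset I) :
    ∀ h : I →₀ ℕ, h.support ⊆ s →
      ∑ p ∈ Finset.HasAntidiagonal.antidiagonal h, ∏ i ∈ s, F i (p.1 i) (p.2 i)
        = ∏ i ∈ s, ∑ q ∈ Finset.HasAntidiagonal.antidiagonal (h i), F i q.1 q.2 := by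
  classical
  induction s using Finset.induction_on with
  | empty =>
      intro h hs
      have hh : h = 0 := Finsupp.support_eq_empty.mp (Finset.subset_empty.mp hs)
      subst hh
      simp
  | @insert a s' ha ih =>
      intro h hs
      have hsub : (h.erase a).support ⊆ s' := by
        rw [Finsupp.support_erase]
        intro i hi
        rcases Finset.mem_erase.mp hi with ⟨hne, hmem⟩
        rcases Finset.mem_insert.mp (hs hmem) with h' | h'
        · exact absurd h' hne
        · exact h'
      have hprod : ∏ i ∈ s', ∑ q ∈ Finset.HasAntidiagonal.antidiagonal ((h.erase a) i), F i q.1 q.2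
          = ∏ i ∈ s', ∑ q ∈ Finset.HasAntidiagonal.antidiagonal (h i), F i q.1 q.2 := by
        refine Finset.prod_congr rfl fun i hi => ?_
        rw [Finsupp.erase_ne (ne_of_mem_of_not_mem hi ha)]
      have bij : ∑ p ∈ Finset.HasAntidiagonal.antidiagonal h, F a (p.1 a) (p.2 a) * ∏ i ∈ s', F i (p.1 i) (p.2 i)
          = ∑ x ∈ (Finset.HasAntidiagonal.antidiagonal (h a)) ×ˢ (Finset.HasAntidiagonal.antidiagonal (h.erase a)),
              F a x.1.1 x.1.2 * ∏ i ∈ s', F i (x.2.1 i) (x.2.2 i) := by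
        refine Finset.sum_nbij' (fun p => ((p.1 a, p.2 a), (p.1.erase a, p.2.erase a)))
          (fun x => (x.2.1 + Finsupp.single a x.1.1, x.2.2 + Finsupp.single a x.1.2))
          ?_ ?_ ?_ ?_ ?_
        · intro p hp
          rw [Finset.HasAntidiagonal.mem_antidiagonal] at hp
          rw [Finset.mem_product, Finset.HasAntidiagonal.mem_antidiagonal, Finset.HasAntidiagonal.mem_antidiagonal]
          constructor
          · rw [← hp]; rfl
          · rw [← Finsupp.erase_add, hp]
        · intro x hx
          rw [Finset.mem_product, Finset.HasAntidiagonal.mem_antidiagonal, Finset.HasAntidiagonal.mem_antidiagonal] at hx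
          rw [Finset.HasAntidiagonal.mem_antidiagonal]
          obtain ⟨hx1, hx2⟩ := hx
          calc x.2.1 + Finsupp.single a x.1.1 + (x.2.2 + Finsupp.single a x.1.2)
              = (x.2.1 + x.2.2) + (Finsupp.single a x.1.1 + Finsupp.single a x.1.2) := by
                abel
            _ = h := by
                rw [hx2, ← Finsupp.single_add, hx1, Finsupp.erase_add_single]
        · intro p hp
          simp only
          rw [Finsupp.erase_add_single, Finsupp.erase_add_single]
        · intro x hx
          rw [Finset.mem_product, Finset.HasAntidiagonal.mem_antidiagonal, Finset.HasAntidiagonal.mem_antidiagonal] at hx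
          obtain ⟨hx1, hx2⟩ := hx
          have ha1 : x.2.1 a = 0 := by
            have := DFunLike.congr_fun hx2 a
            rw [Finsupp.add_apply, Finsupp.erase_same] at this
            omega
          have ha2 : x.2.2 a = 0 := by
            have := DFunLike.congr_fun hx2 a
            rw [Finsupp.add_apply, Finsupp.erase_same] at this
            omega
          have e1 : (x.2.1 + Finsupp.single a x.1.1) a = x.1.1 := by
            rw [Finsupp.add_apply, ha1, Finsupp.single_eq_same, zero_add]
          have e2 : (x.2.2 + Finsupp.single a x.1.2) a = x.1.2 := by
            rw [Finsupp.add_apply, ha2, Finsupp.single_eq_same, zero_add]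
          have e3 : (x.2.1 + Finsupp.single a x.1.1).erase a = x.2.1 := by
            rw [Finsupp.erase_add, Finsupp.erase_single, add_zero,
              Finsupp.erase_of_notMem_support (Finsupp.notMem_support_iff.mpr ha1)]
          have e4 : (x.2.2 + Finsupp.single a x.1.2).erase a = x.2.2 := by
            rw [Finsupp.erase_add, Finsupp.erase_single, add_zero,
              Finsupp.erase_of_notMem_support (Finsupp.notMem_support_iff.mpr ha2)]
          simp only [e1, e2, e3, e4]
        · intro p hp
          simp only
          congr 1
          refine Finset.prod_congr rfl fun i hi => ?_
          rw [Finsupp.erase_ne (ne_of_mem_of_not_mem hi ha),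
            Finsupp.erase_ne (ne_of_mem_of_not_mem hi ha)]
      calc ∑ p ∈ Finset.HasAntidiagonal.antidiagonal h, ∏ i ∈ insert a s', F i (p.1 i) (p.2 i)
          = ∑ p ∈ Finset.HasAntidiagonal.antidiagonal h,
              F a (p.1 a) (p.2 a) * ∏ i ∈ s', F i (p.1 i) (p.2 i) :=
            Finset.sum_congr rfl fun p _ => Finset.prod_insert ha
        _ = ∑ x ∈ (Finset.HasAntidiagonal.antidiagonal (h a)) ×ˢ (Finset.HasAntidiagonal.antidiagonal (h.erase a)),
              F a x.1.1 x.1.2 * ∏ i ∈ s', F i (x.2.1 i) (x.2.2 i) := bij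
        _ = (∑ q ∈ Finset.HasAntidiagonal.antidiagonal (h a), F a q.1 q.2) *
              ∑ p ∈ Finset.HasAntidiagonal.antidiagonal (h.erase a), ∏ i ∈ s', F i (p.1 i) (p.2 i) := by
            rw [Finset.sum_product, Finset.sum_mul]
            exact Finset.sum_congr rfl fun q _ =>
              (Finset.mul_sum (Finset.HasAntidiagonal.antidiagonal (h.erase a))
                (fun p => ∏ i ∈ s', F i (p.1 i) (p.2 i)) (F a q.1 q.2)).symm
        _ = ∏ i ∈ insert a s', ∑ q ∈ Finset.HasAntidiagonal.antidiagonal (h i), F i q.1 q.2 := by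
            rw [ih (h.erase a) hsub, Finset.prod_insert ha, hprod]

lemma binomF_vandermonde (f g h : I →₀ ℕ) :
    ∑ p ∈ Finset.HasAntidiagonal.antidiagonal h, binomF f p.1 * binomF g p.2 = binomF (f + g) h := by
  classical
  set s := (f.support ∪ g.support) ∪ h.support with hs
  have hf : f.support ⊆ s := (Finset.subset_union_left).trans Finset.subset_union_left
  have hg : g.support ⊆ s := (Finset.subset_union_right).trans Finset.subset_union_left
  have hh : h.support ⊆ s := Finset.subset_union_right
  have hfg : (f + g).support ⊆ s :=
    (Finsupp.support_add).trans (Finset.union_subset hf hg)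
  have step1 : ∀ p ∈ Finset.HasAntidiagonal.antidiagonal h, binomF f p.1 * binomF g p.2
      = ∏ i ∈ s, (f i).choose (p.1 i) * (g i).choose (p.2 i) := by
    intro p hp
    rw [Finset.HasAntidiagonal.mem_antidiagonal] at hp
    have hpi : ∀ i, p.1 i + p.2 i = h i := fun i => by
      rw [← hp]; rfl
    have h1 : p.1.support ⊆ s := fun i hi => hh (Finsupp.mem_support_iff.mpr (by
      have := hpi i
      have := Finsupp.mem_support_iff.mp hi
      omega))
    have h2 : p.2.support ⊆ s := fun i hi => hh (Finsupp.mem_support_iff.mpr (by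
      have := hpi i
      have := Finsupp.mem_support_iff.mp hi
      omega))
    rw [binomF_eq_prod hf h1, binomF_eq_prod hg h2, ← Finset.prod_mul_distrib]
  rw [Finset.sum_congr rfl step1,
    vandermonde_aux (fun i a b => (f i).choose a * (g i).choose b) s h hh,
    binomF_eq_prod hfg hh]
  refine Finset.prod_congr rfl fun i _ => ?_
  rw [Finsupp.add_apply, Nat.add_choose_eq]

end Stmt13Aux

/-- For additive maps `δᵢ` with `δᵢ(1) = 0` and
`π^f_g = C(f,g)·δ^{f-g}` (for `g ≤ f`, else `0`), the following are equivalent: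
(i) `π` satisfies (D4); (ii) `π` is commutative; (iii) `Δ` is commutative. -/
theorem stmt13 {R : Type*} [NonAssocRing R] {I : Type*} [LinearOrder I]
    [WellFoundedLT I] (δ : I → R → R)
    (hadd : ∀ (i : I) (r s : R), δ i (r + s) = δ i r + δ i s)
    (h1 : ∀ i : I, δ i 1 = 0) :
    ((∀ (f g h : I →₀ ℕ) (r : R),
        piN δ (f + g) h r =
          ∑ p ∈ Finset.HasAntidiagonal.antidiagonal h, piN δ f p.1 (piN δ g p.2 r)) ↔
      (∀ i j : I, δ i ∘ δ j = δ j ∘ δ i)) ∧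
    ((∀ (f g h k : I →₀ ℕ) (r : R),
        piN δ f g (piN δ h k r) = piN δ h k (piN δ f g r)) ↔
      (∀ i j : I, δ i ∘ δ j = δ j ∘ δ i)) := by
  have main1 : (∀ i j : I, δ i ∘ δ j = δ j ∘ δ i) →
      ∀ (f g h : I →₀ ℕ) (r : R),
        piN δ (f + g) h r =
          ∑ p ∈ Finset.HasAntidiagonal.antidiagonal h, piN δ f p.1 (piN δ g p.2 r) := by
    intro hc f g h r
    have key : ∀ p ∈ Finset.HasAntidiagonal.antidiagonal h, piN δ f p.1 (piN δ g p.2 r)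
        = (binomF f p.1 * binomF g p.2) • deltaPow δ (f + g - h) r := by
      intro p hp
      rw [Finset.HasAntidiagonal.mem_antidiagonal] at hp
      by_cases hp1 : p.1 ≤ f
      · by_cases hp2 : p.2 ≤ g
        · have hid : (f - p.1) + (g - p.2) = f + g - h := by
            ext i
            have e1 := Finsupp.le_def.mp hp1 i
            have e2 := Finsupp.le_def.mp hp2 i
            have e3 : p.1 i + p.2 i = h i := by rw [← hp]; rfl
            simp only [Finsupp.add_apply, Finsupp.tsub_apply]
            omega
          rw [piN_eq, piN_eq, deltaPow_nsmul δ hadd, smul_smul,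
            ← Function.comp_apply (f := deltaPow δ (f - p.1)), ← deltaPow_comp δ hc, hid]
        · rw [piN_eq δ g, binomF_zero_of_not_le hp2, zero_smul, piN_eq,
            deltaPow_map_zero δ hadd, smul_zero, mul_zero, zero_smul]
      · rw [piN_eq δ f, binomF_zero_of_not_le hp1, zero_smul, zero_mul, zero_smul]
    rw [piN_eq, Finset.sum_congr rfl key, ← Finset.sum_smul, binomF_vandermonde]
  have main2 : (∀ i j : I, δ i ∘ δ j = δ j ∘ δ i) →
      ∀ (f g h k : I →₀ ℕ) (r : R),
        piN δ f g (piN δ h k r) = piN δ h k (piN δ f g r) := by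
    intro hc f g h k r
    rw [piN_eq, piN_eq, piN_eq, piN_eq, deltaPow_nsmul δ hadd, deltaPow_nsmul δ hadd,
      smul_smul, smul_smul, mul_comm,
      ← Function.comp_apply (f := deltaPow δ (f - g)),
      ← Function.comp_apply (f := deltaPow δ (h - k)),
      ← deltaPow_comp δ hc, ← deltaPow_comp δ hc, add_comm (f - g)]
  constructor
  · constructor
    · intro H i j
      funext r
      have e1 := H (Finsupp.single i 1) (Finsupp.single j 1) 0 r
      have e2 := H (Finsupp.single j 1) (Finsupp.single i 1) 0 r
      rw [add_comm (Finsupp.single j 1)] at e2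
      rw [Finsupp.antidiagonal_zero, Finset.sum_singleton] at e1 e2
      simp only [piN_zero_right, deltaPow_single_one] at e1 e2
      show δ i (δ j r) = δ j (δ i r)
      exact e1.symm.trans e2
    · exact main1
  · constructor
    · intro H i j
      funext r
      have e := H (Finsupp.single i 1) 0 (Finsupp.single j 1) 0 r
      simp only [piN_zero_right, deltaPow_single_one] at e
      exact e
    · exact main2
end
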